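/- arXiv:1710.03471 — 3 statements merged into one kernel-verified Lean document; each statement's English description precedes it below -/
import Mathlib

section
/- Let b : ℝⁿ → ℝⁿ be globally Lipschitz. Then the functional Ŝ(φ̄) = ‖φ̄'‖_{L²(0,1)} ‖b(φ̄)‖_{L²(0,1)} − ∫₀¹ ⟨φ̄'(s), b(φ̄(s))⟩ ds is sequentially weakly lower semicontinuous on H¹([0,1]; ℝⁿ): for every sequence {φ̄_k} converging weakly to φ̄ in H¹([0,1]; ℝⁿ), one has Ŝ(φ̄) ≤ liminf_{k→∞} Ŝ(φ̄_k). -/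
open MeasureTheory Filter intervalIntegral
open scoped RealInnerProductSpace Topology

noncomputable section

/-- `φ` is an `H¹` path on `[0,T]` with (weak) derivative `dφ`:
`dφ` is square integrable on `(0,T)` and `φ` is the primitive of `dφ`. -/
def IsH1Path {n : ℕ} (T : ℝ) (φ dφ : ℝ → EuclideanSpace ℝ (Fin n)) : Prop :=
  MeasureTheory.MemLp dφ 2 (MeasureTheory.volume.restrict (Set.Ioc (0:ℝ) T)) ∧
  ∀ t ∈ Set.Icc (0:ℝ) T, φ t = φ 0 + ∫ s in (0:ℝ)..t, dφ s

/-- The Freidlin–Wentzell action functional `S_T(φ) = (1/2)∫₀ᵀ ‖φ' - b(φ)‖² dt`. -/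
def action {n : ℕ} (b : EuclideanSpace ℝ (Fin n) → EuclideanSpace ℝ (Fin n))
    (T : ℝ) (φ dφ : ℝ → EuclideanSpace ℝ (Fin n)) : ℝ :=
  (1/2) * ∫ t in (0:ℝ)..T, ‖dφ t - b (φ t)‖^2

/-- The `L²(0,T)` norm of an `ℝⁿ`-valued function. -/
def L2norm {n : ℕ} (T : ℝ) (f : ℝ → EuclideanSpace ℝ (Fin n)) : ℝ :=
  Real.sqrt (∫ t in (0:ℝ)..T, ‖f t‖^2)

/-- The admissible set `A_T` of `H¹` transition paths from `x₁` to `x₂` on `[0,T]`. -/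
def Adm {n : ℕ} (T : ℝ) (x₁ x₂ : EuclideanSpace ℝ (Fin n))
    (φ dφ : ℝ → EuclideanSpace ℝ (Fin n)) : Prop :=
  IsH1Path T φ dφ ∧ φ 0 = x₁ ∧ φ T = x₂

/-- The rescaled action `S(T, φ̄) = (T/2)∫₀¹ ‖T⁻¹ φ̄' - b(φ̄)‖² ds` on `[0,1]`. -/
def Ssc {n : ℕ} (b : EuclideanSpace ℝ (Fin n) → EuclideanSpace ℝ (Fin n))
    (T : ℝ) (φ dφ : ℝ → EuclideanSpace ℝ (Fin n)) : ℝ :=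
  (T/2) * ∫ s in (0:ℝ)..1, ‖T⁻¹ • dφ s - b (φ s)‖^2

/-- The optimal linear time scaling `T̂(φ̄) = ‖φ̄'‖_{L²} / ‖b(φ̄)‖_{L²}`. -/
def That {n : ℕ} (b : EuclideanSpace ℝ (Fin n) → EuclideanSpace ℝ (Fin n))
    (φ dφ : ℝ → EuclideanSpace ℝ (Fin n)) : ℝ :=
  L2norm 1 dφ / L2norm 1 (fun s => b (φ s))

/-- The reformulated action `Ŝ(φ̄) = ‖φ̄'‖_{L²} ‖b(φ̄)‖_{L²} − ∫₀¹⟨φ̄', b(φ̄)⟩ ds`. -/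
def Shat {n : ℕ} (b : EuclideanSpace ℝ (Fin n) → EuclideanSpace ℝ (Fin n))
    (φ dφ : ℝ → EuclideanSpace ℝ (Fin n)) : ℝ :=
  L2norm 1 dφ * L2norm 1 (fun s => b (φ s)) - ∫ s in (0:ℝ)..1, ⟪dφ s, b (φ s)⟫

/-- `a` and `c` are adjacent nodes of the partition (finite node set) `P`. -/
def Adjacent (P : Finset ℝ) (a c : ℝ) : Prop :=
  a ∈ P ∧ c ∈ P ∧ a < c ∧ ∀ p ∈ P, p ≤ a ∨ c ≤ p

/-- `φ` is affine on each element of the partition `P`. -/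
def PiecewiseAffineOn {n : ℕ} (P : Finset ℝ) (φ : ℝ → EuclideanSpace ℝ (Fin n)) : Prop :=
  ∀ a c, Adjacent P a c → ∀ t ∈ Set.Icc a c,
    φ t = φ a + ((t - a) / (c - a)) • (φ c - φ a)

/-- `P` is a partition (node set) of `[0,T]`. -/
def IsPartition (T : ℝ) (P : Finset ℝ) : Prop :=
  (0:ℝ) ∈ P ∧ T ∈ P ∧ ∀ p ∈ P, p ∈ Set.Icc (0:ℝ) T

/-- Weak convergence `φ_k ⇀ φ` in `H¹((0,T); ℝⁿ)`, expressed by testing the pair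
`(φ_k, φ_k')` against arbitrary pairs of `L²` functions. -/
def WeakH1Tendsto {n : ℕ} (T : ℝ) (φk dφk : ℕ → ℝ → EuclideanSpace ℝ (Fin n))
    (φ dφ : ℝ → EuclideanSpace ℝ (Fin n)) : Prop :=
  ∀ g₀ g₁ : ℝ → EuclideanSpace ℝ (Fin n),
    MeasureTheory.MemLp g₀ 2 (MeasureTheory.volume.restrict (Set.Ioc (0:ℝ) T)) →
    MeasureTheory.MemLp g₁ 2 (MeasureTheory.volume.restrict (Set.Ioc (0:ℝ) T)) →
    Tendsto (fun k => (∫ t in (0:ℝ)..T, ⟪φk k t, g₀ t⟫) + ∫ t in (0:ℝ)..T, ⟪dφk k t, g₁ t⟫)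
      atTop (𝓝 ((∫ t in (0:ℝ)..T, ⟪φ t, g₀ t⟫) + ∫ t in (0:ℝ)..T, ⟪dφ t, g₁ t⟫))

/-- Values of `S_T` over the admissible set `A_T` (Problem I). -/
def probISet {n : ℕ} (b : EuclideanSpace ℝ (Fin n) → EuclideanSpace ℝ (Fin n))
    (T : ℝ) (x₁ x₂ : EuclideanSpace ℝ (Fin n)) : Set ℝ :=
  {v | ∃ φ dφ, Adm T x₁ x₂ φ dφ ∧ v = action b T φ dφ}

/-- Values of `S_T` over all `T > 0` and `φ ∈ A_T` (Problem II); its infimum is the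
quasi-potential `V(x₁,x₂)`. -/
def probIISet {n : ℕ} (b : EuclideanSpace ℝ (Fin n) → EuclideanSpace ℝ (Fin n))
    (x₁ x₂ : EuclideanSpace ℝ (Fin n)) : Set ℝ :=
  {v | ∃ T, 0 < T ∧ ∃ φ dφ, Adm T x₁ x₂ φ dφ ∧ v = action b T φ dφ}

/-- Values of `Ŝ` over the rescaled admissible set `A₁`. -/
def shatSet {n : ℕ} (b : EuclideanSpace ℝ (Fin n) → EuclideanSpace ℝ (Fin n))
    (x₁ x₂ : EuclideanSpace ℝ (Fin n)) : Set ℝ :=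
  {v | ∃ φ dφ, Adm 1 x₁ x₂ φ dφ ∧ v = Shat b φ dφ}

/-- Membership in the finite element space `B_h` of continuous piecewise affine
admissible paths associated with the partition `P`. -/
def BmemP {n : ℕ} (P : Finset ℝ) (T : ℝ) (x₁ x₂ : EuclideanSpace ℝ (Fin n))
    (φ dφ : ℝ → EuclideanSpace ℝ (Fin n)) : Prop :=
  Adm T x₁ x₂ φ dφ ∧ PiecewiseAffineOn P φ

/-- Values of `S_T` over the finite element space `B_h` (the discretized Problem I). -/
def discSet {n : ℕ} (b : EuclideanSpace ℝ (Fin n) → EuclideanSpace ℝ (Fin n))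
    (P : Finset ℝ) (T : ℝ) (x₁ x₂ : EuclideanSpace ℝ (Fin n)) : Set ℝ :=
  {v | ∃ φ dφ, BmemP P T x₁ x₂ φ dφ ∧ v = action b T φ dφ}

/-- Values of `Ŝ` over the finite element space `B̄_h` (the discretized Problem II). -/
def discShatSet {n : ℕ} (b : EuclideanSpace ℝ (Fin n) → EuclideanSpace ℝ (Fin n))
    (P : Finset ℝ) (x₁ x₂ : EuclideanSpace ℝ (Fin n)) : Set ℝ :=
  {v | ∃ φ dφ, BmemP P 1 x₁ x₂ φ dφ ∧ v = Shat b φ dφ}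


local notation "μ01" => MeasureTheory.volume.restrict (Set.Ioc (0:ℝ) 1)

namespace Stmt13Aux

instance : IsProbabilityMeasure (volume.restrict (Set.Ioc (0:ℝ) 1)) := by
  constructor
  rw [Measure.restrict_apply_univ]
  simp

variable {F : Type*} [NormedAddCommGroup F] [InnerProductSpace ℝ F]

lemma intInt_eq (f : ℝ → F) : (∫ s in (0:ℝ)..1, f s) = ∫ s, f s ∂μ01 := by
  rw [intervalIntegral.integral_of_le zero_le_one]

lemma inner_toLp {f g : ℝ → F} (hf : MemLp f 2 μ01) (hg : MemLp g 2 μ01) :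
    (inner ℝ (hf.toLp f) (hg.toLp g) : ℝ) = ∫ s, ⟪f s, g s⟫ ∂μ01 := by
  rw [MeasureTheory.L2.inner_def]
  refine integral_congr_ae ?_
  filter_upwards [hf.coeFn_toLp, hg.coeFn_toLp] with s h1 h2
  rw [h1, h2]

lemma inner_toLp_lp {f : ℝ → F} (hf : MemLp f 2 μ01) (G : Lp F 2 μ01) :
    (inner ℝ (hf.toLp f) G : ℝ) = ∫ s, ⟪f s, G s⟫ ∂μ01 := by
  rw [MeasureTheory.L2.inner_def]
  refine integral_congr_ae ?_
  filter_upwards [hf.coeFn_toLp] with s h1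
  rw [h1]

lemma norm_toLp_eq {f : ℝ → F} (hf : MemLp f 2 μ01) :
    ‖hf.toLp f‖ = Real.sqrt (∫ s, ‖f s‖^2 ∂μ01) := by
  have h : ‖hf.toLp f‖^2 = ∫ s, ‖f s‖^2 ∂μ01 := by
    rw [← real_inner_self_eq_norm_sq, inner_toLp hf hf]
    exact integral_congr_ae (.of_forall fun s => real_inner_self_eq_norm_sq _)
  rw [← h, Real.sqrt_sq (norm_nonneg _)]

lemma setIntegral_norm_le {g : ℝ → F} (hg : MemLp g 2 μ01) {S : Set ℝ}
    (hS : MeasurableSet S) :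
    ∫ s in S, ‖g s‖ ∂μ01 ≤ Real.sqrt (μ01 S).toReal * Real.sqrt (∫ s, ‖g s‖^2 ∂μ01) := by
  set f₁ : ℝ → ℝ := S.indicator (fun _ => (1:ℝ)) with hf₁def
  have hf₁ : MemLp f₁ 2 μ01 := memLp_indicator_const 2 hS 1 (Or.inr (measure_ne_top _ _))
  have hf₂ : MemLp (fun s => ‖g s‖) 2 μ01 := hg.norm
  have key : (inner ℝ (hf₁.toLp f₁) (hf₂.toLp _) : ℝ) = ∫ s in S, ‖g s‖ ∂μ01 := by
    rw [inner_toLp hf₁ hf₂, ← MeasureTheory.integral_indicator hS]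
    refine integral_congr_ae (.of_forall fun s => ?_)
    show ‖g s‖ * (f₁ s) = _
    by_cases hs : s ∈ S <;>
      simp [hf₁def, Set.indicator_of_mem, Set.indicator_of_notMem, hs]
  have hn1 : ‖hf₁.toLp f₁‖ = Real.sqrt (μ01 S).toReal := by
    rw [norm_toLp_eq]
    congr 1
    have : ∀ s, ‖f₁ s‖^2 = S.indicator (fun _ => (1:ℝ)) s := by
      intro s
      by_cases hs : s ∈ S <;>
        simp [hf₁def, Set.indicator_of_mem, Set.indicator_of_notMem, hs]
    rw [integral_congr_ae (.of_forall this), MeasureTheory.integral_indicator hS]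
    simp
    rfl
  calc ∫ s in S, ‖g s‖ ∂μ01 = (inner ℝ (hf₁.toLp f₁) (hf₂.toLp _) : ℝ) := key.symm
    _ ≤ ‖hf₁.toLp f₁‖ * ‖hf₂.toLp _‖ := real_inner_le_norm _ _
    _ = Real.sqrt (μ01 S).toReal * Real.sqrt (∫ s, ‖g s‖^2 ∂μ01) := by
        rw [hn1, norm_toLp_eq]
        congr 2
        refine integral_congr_ae (.of_forall fun s => ?_)
        simp [sq_abs]

lemma integral_norm_le {g : ℝ → F} (hg : MemLp g 2 μ01) :
    ∫ s, ‖g s‖ ∂μ01 ≤ Real.sqrt (∫ s, ‖g s‖^2 ∂μ01) := by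
  have := setIntegral_norm_le hg MeasurableSet.univ
  simpa using this

end Stmt13Aux


section Paths
open Stmt13Aux

variable {n : ℕ} {φ dφ : ℝ → EuclideanSpace ℝ (Fin n)}

lemma IsH1Path.intInt (h : IsH1Path 1 φ dφ) {a b : ℝ}
    (ha : a ∈ Set.Icc (0:ℝ) 1) (hb : b ∈ Set.Icc (0:ℝ) 1) :
    IntervalIntegrable dφ volume a b := by
  have h1 : IntegrableOn dφ (Set.Ioc (0:ℝ) 1) volume := h.1.integrable one_le_two
  rw [intervalIntegrable_iff]
  refine h1.mono_set ?_
  rw [Set.uIoc_eq_union]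
  rintro x (hx | hx)
  · exact ⟨lt_of_le_of_lt ha.1 hx.1, le_trans hx.2 hb.2⟩
  · exact ⟨lt_of_le_of_lt hb.1 hx.1, le_trans hx.2 ha.2⟩

lemma IsH1Path.sub_eq (h : IsH1Path 1 φ dφ) {s t : ℝ}
    (hs : s ∈ Set.Icc (0:ℝ) 1) (ht : t ∈ Set.Icc (0:ℝ) 1) :
    φ t - φ s = ∫ u in s..t, dφ u := by
  rw [h.2 t ht, h.2 s hs]
  have := intervalIntegral.integral_interval_sub_left
    (h.intInt (Set.left_mem_Icc.2 zero_le_one) ht)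
    (h.intInt (Set.left_mem_Icc.2 zero_le_one) hs)
  rw [← this]
  abel

lemma IsH1Path.continuousOn (h : IsH1Path 1 φ dφ) :
    ContinuousOn φ (Set.Icc (0:ℝ) 1) := by
  have h1 : IntegrableOn dφ (Set.uIcc (0:ℝ) 1) volume := by
    rw [Set.uIcc_of_le zero_le_one, integrableOn_Icc_iff_integrableOn_Ioc]
    exact h.1.integrable one_le_two
  have hc : ContinuousOn (fun t => φ 0 + ∫ u in (0:ℝ)..t, dφ u) (Set.Icc (0:ℝ) 1) := by
    refine continuousOn_const.add ?_
    have := intervalIntegral.continuousOn_primitive_interval h1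
    rwa [Set.uIcc_of_le zero_le_one] at this
  exact hc.congr h.2

lemma IsH1Path.aesm (h : IsH1Path 1 φ dφ) :
    AEStronglyMeasurable φ μ01 :=
  (h.continuousOn.mono Set.Ioc_subset_Icc_self).aestronglyMeasurable measurableSet_Ioc

lemma IsH1Path.memLp (h : IsH1Path 1 φ dφ) : MemLp φ 2 μ01 := by
  obtain ⟨C, hC⟩ := (isCompact_Icc : IsCompact (Set.Icc (0:ℝ) 1)).exists_bound_of_continuousOn
    h.continuousOn
  refine MemLp.of_bound h.aesm C ?_
  filter_upwards [ae_restrict_mem measurableSet_Ioc] with t ht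
  exact hC t (Set.Ioc_subset_Icc_self ht)

lemma IsH1Path.norm_sub_le (h : IsH1Path 1 φ dφ) {s t : ℝ}
    (hs : s ∈ Set.Icc (0:ℝ) 1) (ht : t ∈ Set.Icc (0:ℝ) 1) (hst : s ≤ t) :
    ‖φ t - φ s‖ ≤ Real.sqrt (t - s) * Real.sqrt (∫ u, ‖dφ u‖^2 ∂μ01) := by
  rw [h.sub_eq hs ht]
  have h2 : ∫ u in Set.Ioc s t, ‖dφ u‖ ∂volume = ∫ u in Set.Ioc s t, ‖dφ u‖ ∂μ01 := by
    rw [Measure.restrict_restrict measurableSet_Ioc,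
      Set.inter_eq_self_of_subset_left (Set.Ioc_subset_Ioc hs.1 ht.2)]
  calc ‖∫ u in s..t, dφ u‖ ≤ ∫ u in s..t, ‖dφ u‖ :=
        intervalIntegral.norm_integral_le_integral_norm hst
    _ = ∫ u in Set.Ioc s t, ‖dφ u‖ ∂μ01 := by
        rw [intervalIntegral.integral_of_le hst, h2]
    _ ≤ Real.sqrt (μ01 (Set.Ioc s t)).toReal * Real.sqrt (∫ u, ‖dφ u‖^2 ∂μ01) :=
        setIntegral_norm_le h.1 measurableSet_Ioc
    _ ≤ Real.sqrt (t - s) * Real.sqrt (∫ u, ‖dφ u‖^2 ∂μ01) := by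
        gcongr
        calc (μ01 (Set.Ioc s t)).toReal ≤ (volume (Set.Ioc s t)).toReal := by
              refine ENNReal.toReal_mono (by simp) ?_
              rw [Measure.restrict_apply measurableSet_Ioc]
              exact measure_mono Set.inter_subset_left
          _ = t - s := by rw [Real.volume_Ioc, ENNReal.toReal_ofReal (by linarith)]

lemma IsH1Path.norm_sub_le_sqrt (h : IsH1Path 1 φ dφ) {s t : ℝ}
    (hs : s ∈ Set.Icc (0:ℝ) 1) (ht : t ∈ Set.Icc (0:ℝ) 1) :
    ‖φ t - φ s‖ ≤ Real.sqrt (∫ u, ‖dφ u‖^2 ∂μ01) := by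
  have key : ∀ a b : ℝ, a ∈ Set.Icc (0:ℝ) 1 → b ∈ Set.Icc (0:ℝ) 1 → a ≤ b →
      ‖φ b - φ a‖ ≤ Real.sqrt (∫ u, ‖dφ u‖^2 ∂μ01) := by
    intro a b ha hb hab
    refine (h.norm_sub_le ha hb hab).trans ?_
    have h1 : Real.sqrt (b - a) ≤ 1 := by
      rw [show (1:ℝ) = Real.sqrt 1 by simp]
      exact Real.sqrt_le_sqrt (by linarith [ha.1, hb.2])
    exact mul_le_of_le_one_left (Real.sqrt_nonneg _) h1
  rcases le_total s t with hst | hst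
  · exact key s t hs ht hst
  · rw [norm_sub_rev]; exact key t s ht hs hst

lemma IsH1Path.norm_le (h : IsH1Path 1 φ dφ) {t : ℝ} (ht : t ∈ Set.Icc (0:ℝ) 1) :
    ‖φ t‖ ≤ Real.sqrt (∫ s, ‖φ s‖^2 ∂μ01) + Real.sqrt (∫ u, ‖dφ u‖^2 ∂μ01) := by
  set I := Real.sqrt (∫ u, ‖dφ u‖^2 ∂μ01) with hI
  have key : ∀ s ∈ Set.Ioc (0:ℝ) 1, ‖φ t‖ ≤ ‖φ s‖ + I := by
    intro s hs
    calc ‖φ t‖ = ‖φ s + (φ t - φ s)‖ := by congr 1; abel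
      _ ≤ ‖φ s‖ + ‖φ t - φ s‖ := norm_add_le _ _
      _ ≤ ‖φ s‖ + I := by
          gcongr
          exact h.norm_sub_le_sqrt (Set.Ioc_subset_Icc_self hs) ht
  have h2 : ‖φ t‖ = ∫ _, ‖φ t‖ ∂μ01 := by simp
  have h3 : (∫ (_ : ℝ), ‖φ t‖ ∂μ01) ≤ ∫ s, (‖φ s‖ + I) ∂μ01 := by
    refine integral_mono_ae (integrable_const _)
      (((h.memLp.integrable one_le_two).norm.add (integrable_const _))) ?_
    filter_upwards [ae_restrict_mem measurableSet_Ioc] with s hs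
    exact key s hs
  have h4 : (∫ s, (‖φ s‖ + I) ∂μ01) = (∫ s, ‖φ s‖ ∂μ01) + I := by
    rw [integral_add (h.memLp.integrable one_le_two).norm (integrable_const _)]
    simp
  have h5 := Stmt13Aux.integral_norm_le h.memLp
  linarith [h2, h3, h4, h5]

lemma IsH1Path.avg_close (h : IsH1Path 1 φ dφ) {t δ : ℝ} (ht : t ∈ Set.Ioo (0:ℝ) 1)
    (hδ : 0 < δ) (hδ1 : t + δ ≤ 1) (e : EuclideanSpace ℝ (Fin n)) :
    |(∫ s, ⟪φ s, ((Set.Ioc t (t+δ)).indicator (fun _ => δ⁻¹ • e)) s⟫ ∂μ01) - ⟪φ t, e⟫|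
      ≤ Real.sqrt δ * Real.sqrt (∫ u, ‖dφ u‖^2 ∂μ01) * ‖e‖ := by
  set I := Real.sqrt (∫ u, ‖dφ u‖^2 ∂μ01) with hI
  set W := Set.Ioc t (t+δ) with hW
  have hWsub : W ⊆ Set.Ioc 0 1 := Set.Ioc_subset_Ioc ht.1.le hδ1
  have hμW : μ01 W = ENNReal.ofReal δ := by
    rw [Measure.restrict_apply measurableSet_Ioc,
      Set.inter_eq_self_of_subset_left hWsub, Real.volume_Ioc]
    congr 1; ring
  have hμWr : (μ01 W).toReal = δ := by rw [hμW, ENNReal.toReal_ofReal hδ.le]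
  have hA : (∫ s, ⟪φ s, W.indicator (fun _ => δ⁻¹ • e) s⟫ ∂μ01)
      = ∫ s in W, ⟪φ s, δ⁻¹ • e⟫ ∂μ01 := by
    have step1 : (∫ s, ⟪φ s, W.indicator (fun _ => δ⁻¹ • e) s⟫ ∂μ01)
        = ∫ s, W.indicator (fun u => ⟪φ u, δ⁻¹ • e⟫) s ∂μ01 := by
      refine integral_congr_ae (.of_forall fun s => ?_)
      by_cases hs : s ∈ W <;>
        simp [Set.indicator_of_mem, Set.indicator_of_notMem, hs]
    rw [step1, MeasureTheory.integral_indicator measurableSet_Ioc]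
  have hB : (∫ (_ : ℝ) in W, ⟪φ t, δ⁻¹ • e⟫ ∂μ01) = ⟪φ t, e⟫ := by
    rw [setIntegral_const, measureReal_def, hμWr, real_inner_smul_right, smul_eq_mul]
    field_simp
  have hint1 : Integrable (fun s => ⟪φ s, δ⁻¹ • e⟫)
      ((MeasureTheory.volume.restrict (Set.Ioc (0:ℝ) 1)).restrict W) :=
    ((h.memLp.integrable one_le_two).restrict).inner_const _
  have hsub : (∫ s in W, ⟪φ s, δ⁻¹ • e⟫ ∂μ01) - ⟪φ t, e⟫
      = ∫ s in W, ⟪φ s - φ t, δ⁻¹ • e⟫ ∂μ01 := by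
    rw [← hB, ← integral_sub hint1 (integrable_const _)]
    refine integral_congr_ae (.of_forall fun s => ?_)
    simp [inner_sub_left]
  rw [hA, hsub]
  have hbound : ∀ s ∈ W, ‖⟪φ s - φ t, δ⁻¹ • e⟫‖ ≤ Real.sqrt δ * I * (δ⁻¹ * ‖e‖) := by
    intro s hs
    have hsIcc : s ∈ Set.Icc (0:ℝ) 1 := Set.Ioc_subset_Icc_self (hWsub hs)
    have htIcc : t ∈ Set.Icc (0:ℝ) 1 := ⟨ht.1.le, ht.2.le⟩
    have h1 : ‖φ s - φ t‖ ≤ Real.sqrt δ * I := by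
      refine (h.norm_sub_le htIcc hsIcc hs.1.le).trans ?_
      exact mul_le_mul_of_nonneg_right
        (Real.sqrt_le_sqrt (by linarith [hs.2])) (Real.sqrt_nonneg _)
    calc ‖⟪φ s - φ t, δ⁻¹ • e⟫‖ ≤ ‖φ s - φ t‖ * ‖δ⁻¹ • e‖ := abs_real_inner_le_norm _ _
      _ ≤ (Real.sqrt δ * I) * (δ⁻¹ * ‖e‖) := by
          rw [norm_smul]
          have : ‖(δ⁻¹:ℝ)‖ = δ⁻¹ := by
            rw [Real.norm_eq_abs, abs_of_nonneg (inv_nonneg.2 hδ.le)]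
          rw [this]
          gcongr
  have hmeas : AEStronglyMeasurable (fun s => ⟪φ s - φ t, δ⁻¹ • e⟫)
      ((MeasureTheory.volume.restrict (Set.Ioc (0:ℝ) 1)).restrict W) :=
    ((h.aesm.restrict.sub aestronglyMeasurable_const).inner aestronglyMeasurable_const)
  have := norm_setIntegral_le_of_norm_le_const (C := Real.sqrt δ * I * (δ⁻¹ * ‖e‖))
    (by rw [hμW]; exact ENNReal.ofReal_lt_top) hbound
  rw [measureReal_def, hμWr] at this
  calc |∫ s in W, ⟪φ s - φ t, δ⁻¹ • e⟫ ∂μ01| ≤ Real.sqrt δ * I * (δ⁻¹ * ‖e‖) * δ := this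
    _ = Real.sqrt δ * I * ‖e‖ := by field_simp

lemma IsH1Path.memLp_comp (h : IsH1Path 1 φ dφ) {K : NNReal}
    {b : EuclideanSpace ℝ (Fin n) → EuclideanSpace ℝ (Fin n)} (hb : LipschitzWith K b) :
    MemLp (fun s => b (φ s)) 2 μ01 := by
  obtain ⟨D, hD⟩ := (isCompact_Icc : IsCompact (Set.Icc (0:ℝ) 1)).exists_bound_of_continuousOn
    h.continuousOn
  refine MemLp.of_bound (hb.continuous.comp_aestronglyMeasurable h.aesm) (‖b 0‖ + K * D) ?_
  filter_upwards [ae_restrict_mem measurableSet_Ioc] with t htm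
  have htI : t ∈ Set.Icc (0:ℝ) 1 := Set.Ioc_subset_Icc_self htm
  have h1 : ‖b (φ t) - b 0‖ ≤ K * ‖φ t‖ := by
    simpa [dist_eq_norm] using hb.dist_le_mul (φ t) 0
  calc ‖b (φ t)‖ = ‖b 0 + (b (φ t) - b 0)‖ := by congr 1; abel
    _ ≤ ‖b 0‖ + ‖b (φ t) - b 0‖ := norm_add_le _ _
    _ ≤ ‖b 0‖ + K * ‖φ t‖ := by linarith
    _ ≤ ‖b 0‖ + K * D := by
        have := hD t htI
        have hK : (0:ℝ) ≤ K := K.coe_nonneg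
        nlinarith

lemma shat_eq {b : EuclideanSpace ℝ (Fin n) → EuclideanSpace ℝ (Fin n)}
    (h : IsH1Path 1 φ dφ) (hB : MemLp (fun s => b (φ s)) 2 μ01) :
    Shat b φ dφ = ‖h.1.toLp dφ‖ * ‖hB.toLp _‖ - (inner ℝ (h.1.toLp dφ) (hB.toLp _) : ℝ) := by
  unfold Shat L2norm
  rw [Stmt13Aux.intInt_eq (fun t => ‖dφ t‖^2),
    Stmt13Aux.intInt_eq (fun t => ‖b (φ t)‖^2),
    Stmt13Aux.intInt_eq (fun s => (⟪dφ s, b (φ s)⟫:ℝ)),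
    Stmt13Aux.norm_toLp_eq h.1, Stmt13Aux.norm_toLp_eq hB,
    Stmt13Aux.inner_toLp h.1 hB]

end Paths

lemma bound_aux {C Bn i x y : ℝ} (hC : 0 ≤ C) (hx : x ≤ C) (hx0 : 0 ≤ x) (hy0 : 0 ≤ y)
    (hy : y ≤ Bn + 1) (hi : |i| ≤ x * y) :
    x * y - i ≤ C * (Bn + 1) + (C * Bn + C * 1) := by
  nlinarith [neg_abs_le i, abs_nonneg i]

set_option maxHeartbeats 1000000 in
/-- the reformulated action `Ŝ` is sequentially weakly lower semicontinuous
on `H¹((0,1);ℝⁿ)`: if `φ̄_k ⇀ φ̄` weakly in `H¹`, then `Ŝ(φ̄) ≤ liminf Ŝ(φ̄_k)`. -/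
theorem stmt13 {n : ℕ} (b : EuclideanSpace ℝ (Fin n) → EuclideanSpace ℝ (Fin n))
    (K : NNReal) (hb : LipschitzWith K b)
    (φk dφk : ℕ → ℝ → EuclideanSpace ℝ (Fin n))
    (φ dφ : ℝ → EuclideanSpace ℝ (Fin n))
    (hk : ∀ k, IsH1Path 1 (φk k) (dφk k))
    (hφ : IsH1Path 1 φ dφ)
    (hweak : WeakH1Tendsto 1 φk dφk φ dφ) :
    Shat b φ dφ ≤ Filter.liminf (fun k => Shat b (φk k) (dφk k)) atTop := by
  classical
  have hbc : Continuous b := hb.continuous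
  have hAk : ∀ k, MemLp (dφk k) 2 μ01 := fun k => (hk k).1
  have hΦk : ∀ k, MemLp (φk k) 2 μ01 := fun k => (hk k).memLp
  set A : ℕ → Lp (EuclideanSpace ℝ (Fin n)) 2 μ01 := fun k => (hAk k).toLp (dφk k) with hAdef
  set Ainf : Lp (EuclideanSpace ℝ (Fin n)) 2 μ01 := (hφ.1).toLp dφ with hAinfdef
  set Φ : ℕ → Lp (EuclideanSpace ℝ (Fin n)) 2 μ01 := fun k => (hΦk k).toLp (φk k) with hΦdef
  have hBmem : MemLp (fun s => b (φ s)) 2 μ01 := hφ.memLp_comp hb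
  have hBkmem : ∀ k, MemLp (fun s => b (φk k s)) 2 μ01 := fun k => (hk k).memLp_comp hb
  set B : Lp (EuclideanSpace ℝ (Fin n)) 2 μ01 := hBmem.toLp _ with hBdef
  set Bk : ℕ → Lp (EuclideanSpace ℝ (Fin n)) 2 μ01 := fun k => (hBkmem k).toLp _ with hBkdef
  clear_value A Ainf Φ B Bk
  -- uniform bound via Banach–Steinhaus
  obtain ⟨C, hC1, hCΦ, hCA⟩ :
      ∃ C : ℝ, 1 ≤ C ∧ (∀ k, ‖Φ k‖ ≤ C) ∧ (∀ k, ‖A k‖ ≤ C) := by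
    set T : ℕ → (Lp (EuclideanSpace ℝ (Fin n)) 2 μ01 × Lp (EuclideanSpace ℝ (Fin n)) 2 μ01)
        →L[ℝ] ℝ :=
      fun k => ((innerSL ℝ (Φ k)).comp (ContinuousLinearMap.fst ℝ _ _)) +
        ((innerSL ℝ (A k)).comp (ContinuousLinearMap.snd ℝ _ _)) with hT
    have hTapp : ∀ k g₀ g₁, T k (g₀, g₁) = (inner ℝ (Φ k) g₀ : ℝ) + (inner ℝ (A k) g₁ : ℝ) := by
      intro k g₀ g₁
      simp [hT]
    have hpt : ∀ x : Lp (EuclideanSpace ℝ (Fin n)) 2 μ01 × Lp (EuclideanSpace ℝ (Fin n)) 2 μ01,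
        ∃ C', ∀ k, ‖T k x‖ ≤ C' := by
      rintro ⟨g₀, g₁⟩
      have hw := hweak g₀ g₁ (Lp.memLp g₀) (Lp.memLp g₁)
      have heq : ∀ k, T k (g₀, g₁) =
          (∫ t in (0:ℝ)..1, ⟪φk k t, g₀ t⟫) + ∫ t in (0:ℝ)..1, ⟪dφk k t, g₁ t⟫ := by
        intro k
        rw [hTapp]
        simp only [hΦdef, hAdef]
        rw [Stmt13Aux.inner_toLp_lp (hΦk k) g₀, Stmt13Aux.inner_toLp_lp (hAk k) g₁,
          ← Stmt13Aux.intInt_eq, ← Stmt13Aux.intInt_eq]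
      have hT2 : Tendsto (fun k => T k (g₀, g₁)) atTop _ := (tendsto_congr heq).2 hw
      obtain ⟨C', hC'⟩ := hT2.norm.bddAbove_range
      exact ⟨C', fun k => hC' (Set.mem_range_self k)⟩
    obtain ⟨C', hC'⟩ := banach_steinhaus hpt
    have hC'0 : (0:ℝ) ≤ C' := le_trans (norm_nonneg (T 0)) (hC' 0)
    refine ⟨max C' 1, le_max_right _ _, fun k => ?_, fun k => ?_⟩
    · have h2 : T k (Φ k, 0) = ‖Φ k‖^2 := by
        rw [hTapp]
        simp [real_inner_self_eq_norm_sq]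
      have h3 : ‖T k (Φ k, 0)‖ ≤ ‖T k‖ * ‖(Φ k, (0 : Lp (EuclideanSpace ℝ (Fin n)) 2 μ01))‖ :=
        (T k).le_opNorm _
      have h4 : ‖(Φ k, (0 : Lp (EuclideanSpace ℝ (Fin n)) 2 μ01))‖ = ‖Φ k‖ := by
        rw [Prod.norm_def]
        simp [max_eq_left (norm_nonneg _)]
      have h1 : ‖Φ k‖^2 ≤ C' * ‖Φ k‖ := by
        have h5 : ‖Φ k‖^2 = ‖T k (Φ k, 0)‖ := by
          rw [h2, Real.norm_eq_abs, abs_of_nonneg (sq_nonneg _)]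
        rw [h5]
        refine le_trans h3 ?_
        rw [h4]
        exact mul_le_mul_of_nonneg_right (hC' k) (norm_nonneg _)
      rcases (norm_nonneg (Φ k)).lt_or_eq with hx | hx
      · rw [pow_two] at h1
        exact le_trans ((mul_le_mul_iff_of_pos_right hx).1 h1) (le_max_left _ _)
      · rw [← hx]
        exact le_trans zero_le_one (le_max_right _ _)
    · have h2 : T k (0, A k) = ‖A k‖^2 := by
        rw [hTapp]
        simp [real_inner_self_eq_norm_sq]
      have h3 : ‖T k (0, A k)‖ ≤ ‖T k‖ * ‖((0 : Lp (EuclideanSpace ℝ (Fin n)) 2 μ01), A k)‖ :=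
        (T k).le_opNorm _
      have h4 : ‖((0 : Lp (EuclideanSpace ℝ (Fin n)) 2 μ01), A k)‖ = ‖A k‖ := by
        rw [Prod.norm_def]
        simp [max_eq_right (norm_nonneg _)]
      have h1 : ‖A k‖^2 ≤ C' * ‖A k‖ := by
        have h5 : ‖A k‖^2 = ‖T k (0, A k)‖ := by
          rw [h2, Real.norm_eq_abs, abs_of_nonneg (sq_nonneg _)]
        rw [h5]
        refine le_trans h3 ?_
        rw [h4]
        exact mul_le_mul_of_nonneg_right (hC' k) (norm_nonneg _)
      rcases (norm_nonneg (A k)).lt_or_eq with hx | hx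
      · rw [pow_two] at h1
        exact le_trans ((mul_le_mul_iff_of_pos_right hx).1 h1) (le_max_left _ _)
      · rw [← hx]
        exact le_trans zero_le_one (le_max_right _ _)
  have hCpos : 0 < C := lt_of_lt_of_le one_pos hC1
  -- uniform pointwise bound on φk
  have hMk : ∀ k, ∀ t ∈ Set.Icc (0:ℝ) 1, ‖φk k t‖ ≤ 2*C := by
    intro k t ht
    have h1 := (hk k).norm_le ht
    rw [← Stmt13Aux.norm_toLp_eq (hΦk k), ← Stmt13Aux.norm_toLp_eq (hAk k)] at h1
    have h2 := hCΦ k; have h3 := hCA k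
    simp only [hΦdef, hAdef] at h2 h3
    linarith
  obtain ⟨Dφ, hDφ⟩ := (isCompact_Icc : IsCompact (Set.Icc (0:ℝ) 1)).exists_bound_of_continuousOn
    hφ.continuousOn
  -- pointwise convergence on Ioo
  have hIφ : Real.sqrt (∫ u, ‖dφ u‖^2 ∂μ01) = ‖Ainf‖ := by
    rw [hAinfdef, Stmt13Aux.norm_toLp_eq hφ.1]
  have hIk : ∀ k, Real.sqrt (∫ u, ‖dφk k u‖^2 ∂μ01) = ‖A k‖ := by
    intro k
    simp only [hAdef]
    exact (Stmt13Aux.norm_toLp_eq (hAk k)).symm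
  have hptconv : ∀ t ∈ Set.Ioo (0:ℝ) 1, Tendsto (fun k => φk k t) atTop (𝓝 (φ t)) := by
    intro t ht
    set D := max C ‖Ainf‖ with hD
    have hDpos : 0 < D := lt_of_lt_of_le hCpos (le_max_left _ _)
    have hcoord : ∀ e : EuclideanSpace ℝ (Fin n),
        Tendsto (fun k => (⟪φk k t, e⟫:ℝ)) atTop (𝓝 ⟪φ t, e⟫) := by
      intro e
      rw [Metric.tendsto_atTop]
      intro ε hε
      set δ := min ((1 - t)/2) ((ε / (4 * D * (‖e‖ + 1)))^2) with hδdef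
      have hδpos : 0 < δ := lt_min (by linarith [ht.2]) (by positivity)
      have hδ1 : t + δ ≤ 1 := by
        have h1 : δ ≤ (1 - t)/2 := min_le_left _ _
        linarith [ht.2]
      have hsq : Real.sqrt δ ≤ ε / (4 * D * (‖e‖ + 1)) := by
        refine le_trans (Real.sqrt_le_sqrt (min_le_right _ _)) ?_
        rw [Real.sqrt_sq (by positivity)]
      have hkey : Real.sqrt δ * D * ‖e‖ ≤ ε/4 := by
        have h2 : Real.sqrt δ * D * ‖e‖ ≤ (ε / (4 * D * (‖e‖ + 1))) * D * ‖e‖ :=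
          mul_le_mul_of_nonneg_right
            (mul_le_mul_of_nonneg_right hsq hDpos.le) (norm_nonneg e)
        refine le_trans h2 ?_
        rw [div_mul_eq_mul_div, div_mul_eq_mul_div,
          div_le_div_iff₀ (by positivity) (by norm_num : (0:ℝ) < 4)]
        nlinarith [norm_nonneg e, mul_nonneg hε.le hDpos.le]
      set g₀ : ℝ → EuclideanSpace ℝ (Fin n) :=
        (Set.Ioc t (t+δ)).indicator (fun _ => δ⁻¹ • e) with hg₀def
      have hg₀ : MemLp g₀ 2 μ01 :=
        memLp_indicator_const 2 measurableSet_Ioc _ (Or.inr (measure_ne_top _ _))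
      have hw := hweak g₀ (fun _ => 0) hg₀ MemLp.zero'
      have h0 : ∀ (ψ : ℝ → EuclideanSpace ℝ (Fin n)),
          (∫ s in (0:ℝ)..1, (⟪ψ s, (0:EuclideanSpace ℝ (Fin n))⟫:ℝ)) = 0 := fun ψ => by simp
      simp only [h0, add_zero, Stmt13Aux.intInt_eq] at hw
      have hwin_k : ∀ k, |(∫ s, ⟪φk k s, g₀ s⟫ ∂μ01) - ⟪φk k t, e⟫| ≤ ε/4 := by
        intro k
        refine le_trans (le_trans ((hk k).avg_close ht hδpos hδ1 e) ?_) hkey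
        refine mul_le_mul_of_nonneg_right (mul_le_mul_of_nonneg_left ?_
          (Real.sqrt_nonneg δ)) (norm_nonneg e)
        rw [hIk k]
        exact le_trans (hCA k) (le_max_left _ _)
      have hwin : |(∫ s, ⟪φ s, g₀ s⟫ ∂μ01) - ⟪φ t, e⟫| ≤ ε/4 := by
        refine le_trans (le_trans (hφ.avg_close ht hδpos hδ1 e) ?_) hkey
        refine mul_le_mul_of_nonneg_right (mul_le_mul_of_nonneg_left ?_
          (Real.sqrt_nonneg δ)) (norm_nonneg e)
        rw [hIφ]
        exact le_max_right _ _
      obtain ⟨N, hN⟩ := (Metric.tendsto_atTop.1 hw) (ε/4) (by positivity)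
      refine ⟨N, fun k hkN => ?_⟩
      have h5 := hN k hkN
      rw [Real.dist_eq] at h5 ⊢
      have h6 := hwin_k k
      have tri := abs_sub_le (⟪φk k t, e⟫:ℝ) (∫ s, ⟪φk k s, g₀ s⟫ ∂μ01) (⟪φ t, e⟫:ℝ)
      have tri2 := abs_sub_le (∫ s, ⟪φk k s, g₀ s⟫ ∂μ01) (∫ s, ⟪φ s, g₀ s⟫ ∂μ01)
        (⟪φ t, e⟫:ℝ)
      have e1 : |(⟪φk k t, e⟫:ℝ) - ∫ s, ⟪φk k s, g₀ s⟫ ∂μ01|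
          = |(∫ s, ⟪φk k s, g₀ s⟫ ∂μ01) - ⟪φk k t, e⟫| := abs_sub_comm _ _
      linarith
    have h7 : Tendsto (fun k => (fun i => φk k t i)) atTop (𝓝 (fun i => φ t i)) := by
      rw [tendsto_pi_nhds]
      intro i
      have := hcoord (EuclideanSpace.single i (1:ℝ))
      simpa [EuclideanSpace.inner_single_right] using this
    have h8 := ((EuclideanSpace.equiv (Fin n) ℝ).symm.continuous.tendsto _).comp h7
    exact h8
  -- strong L² convergence of b ∘ φk
  have hBconv : Tendsto (fun k => ‖Bk k - B‖) atTop (𝓝 0) := by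
    have haeIoo : ∀ᵐ s ∂μ01, s ∈ Set.Ioo (0:ℝ) 1 := by
      have h1 : (μ01) ({(1:ℝ)} : Set ℝ) = 0 := by
        rw [Measure.restrict_apply (measurableSet_singleton 1)]
        exact le_antisymm (le_trans (measure_mono Set.inter_subset_left) (by simp)) (by simp)
      have h2 : ∀ᵐ s ∂μ01, s ∉ ({(1:ℝ)} : Set ℝ) := measure_eq_zero_iff_ae_notMem.1 h1
      filter_upwards [ae_restrict_mem measurableSet_Ioc, h2] with s hs h1s
      exact ⟨hs.1, lt_of_le_of_ne hs.2 h1s⟩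
    have hDφ0 : 0 ≤ Dφ :=
      le_trans (norm_nonneg (φ 0)) (hDφ 0 ⟨le_refl 0, zero_le_one⟩)
    have hint : Tendsto (fun k => ∫ s, ‖b (φk k s) - b (φ s)‖^2 ∂μ01) atTop
        (𝓝 (∫ (_ : ℝ), (0:ℝ) ∂μ01)) := by
      refine tendsto_integral_of_dominated_convergence
        (fun _ => ((K:ℝ) * (2*C + Dφ))^2) ?_ ?_ ?_ ?_
      · intro k
        have hm := ((hbc.comp_aestronglyMeasurable (hk k).aesm).sub
          (hbc.comp_aestronglyMeasurable hφ.aesm)).norm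
        exact ((hm.mul hm).congr (Eventually.of_forall fun s => (sq _).symm))
      · exact integrable_const _
      · intro k
        filter_upwards [ae_restrict_mem measurableSet_Ioc] with s hs
        have hsI : s ∈ Set.Icc (0:ℝ) 1 := Set.Ioc_subset_Icc_self hs
        have h1 : ‖b (φk k s) - b (φ s)‖ ≤ (K:ℝ) * (2*C + Dφ) := by
          have h2 : ‖b (φk k s) - b (φ s)‖ ≤ (K:ℝ) * ‖φk k s - φ s‖ := by
            simpa [dist_eq_norm] using hb.dist_le_mul (φk k s) (φ s)
          have h3 : ‖φk k s - φ s‖ ≤ 2*C + Dφ := by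
            refine le_trans (norm_sub_le _ _) ?_
            have := hMk k s hsI
            have := hDφ s hsI
            linarith
          have hK : (0:ℝ) ≤ (K:ℝ) := K.coe_nonneg
          nlinarith
        rw [Real.norm_eq_abs, abs_of_nonneg (by positivity)]
        exact pow_le_pow_left₀ (norm_nonneg _) h1 2
      · filter_upwards [haeIoo] with s hs
        have hcont : Continuous (fun x : EuclideanSpace ℝ (Fin n) => ‖b x - b (φ s)‖^2) :=
          (hbc.sub continuous_const).norm.pow 2
        have := (hcont.tendsto (φ s)).comp (hptconv s hs)
        simpa [Function.comp_def] using this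
    have hz : (∫ (_ : ℝ), (0:ℝ) ∂μ01) = 0 := integral_zero _ _
    rw [hz] at hint
    have heqn : ∀ k, ‖Bk k - B‖ = Real.sqrt (∫ s, ‖b (φk k s) - b (φ s)‖^2 ∂μ01) := by
      intro k
      simp only [hBkdef, hBdef]
      rw [← MemLp.toLp_sub, Stmt13Aux.norm_toLp_eq]
      simp only [Pi.sub_apply]
    have hsq : Tendsto (fun k => Real.sqrt (∫ s, ‖b (φk k s) - b (φ s)‖^2 ∂μ01)) atTop
        (𝓝 (Real.sqrt 0)) := (Real.continuous_sqrt.tendsto 0).comp hint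
    rw [Real.sqrt_zero] at hsq
    exact (tendsto_congr heqn).2 hsq
  -- weak limits
  have hwk : ∀ (g : ℝ → EuclideanSpace ℝ (Fin n)) (hg : MemLp g 2 μ01),
      Tendsto (fun k => (inner ℝ (A k) (hg.toLp g) : ℝ)) atTop
        (𝓝 (inner ℝ Ainf (hg.toLp g) : ℝ)) := by
    intro g hg
    have hw := hweak (fun _ => 0) g MemLp.zero' hg
    have h0 : ∀ (ψ : ℝ → EuclideanSpace ℝ (Fin n)),
        (∫ t in (0:ℝ)..1, (⟪ψ t, (0:EuclideanSpace ℝ (Fin n))⟫:ℝ)) = 0 := fun ψ => by simp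
    simp only [h0, zero_add] at hw
    have heq : ∀ k, (inner ℝ (A k) (hg.toLp g) : ℝ) = ∫ t in (0:ℝ)..1, ⟪dφk k t, g t⟫ := by
      intro k
      simp only [hAdef]
      rw [Stmt13Aux.inner_toLp (hAk k) hg, ← Stmt13Aux.intInt_eq]
    have heq2 : (inner ℝ Ainf (hg.toLp g) : ℝ) = ∫ t in (0:ℝ)..1, ⟪dφ t, g t⟫ := by
      simp only [hAinfdef]
      rw [Stmt13Aux.inner_toLp hφ.1 hg, ← Stmt13Aux.intInt_eq]
    rw [heq2]
    exact (tendsto_congr heq).2 hw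
  have hlim1 : Tendsto (fun k => (inner ℝ (A k) B : ℝ)) atTop (𝓝 (inner ℝ Ainf B : ℝ)) := by
    rw [hBdef]
    exact hwk _ hBmem
  have hlim2 : Tendsto (fun k => (inner ℝ (A k) Ainf : ℝ)) atTop (𝓝 (‖Ainf‖^2)) := by
    rw [← real_inner_self_eq_norm_sq]
    simpa only [← hAinfdef] using hwk dφ hφ.1
  have hlim3 : Tendsto (fun k => (inner ℝ (A k) (Bk k) : ℝ)) atTop (𝓝 (inner ℝ Ainf B : ℝ)) := by
    have hdiff : Tendsto (fun k => (inner ℝ (A k) (Bk k - B) : ℝ)) atTop (𝓝 0) := by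
      have hC0 : Tendsto (fun k => C * ‖Bk k - B‖) atTop (𝓝 0) := by
        simpa using hBconv.const_mul C
      refine squeeze_zero_norm (fun k => ?_) hC0
      calc ‖(inner ℝ (A k) (Bk k - B) : ℝ)‖ ≤ ‖A k‖ * ‖Bk k - B‖ :=
            abs_real_inner_le_norm _ _
        _ ≤ C * ‖Bk k - B‖ := by
            have := hCA k
            have := norm_nonneg (Bk k - B)
            nlinarith
    have h2 := hdiff.add hlim1
    rw [zero_add] at h2
    refine h2.congr fun k => ?_
    rw [inner_sub_right]; ring
  have hlim4 : Tendsto (fun k => ‖Bk k‖) atTop (𝓝 ‖B‖) := by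
    have h1 : Tendsto (fun k => ‖Bk k‖ - ‖B‖) atTop (𝓝 0) :=
      squeeze_zero_norm (fun k => abs_norm_sub_norm_le (Bk k) B) hBconv
    have h2 := h1.add (tendsto_const_nhds (x := ‖B‖))
    rw [zero_add] at h2
    simpa using h2
  -- rewrite Shat
  have hShatk : ∀ k, Shat b (φk k) (dφk k) = ‖A k‖ * ‖Bk k‖ - (inner ℝ (A k) (Bk k) : ℝ) := by
    intro k
    simp only [hAdef, hBkdef]
    exact shat_eq (hk k) (hBkmem k)
  have hShat : Shat b φ dφ = ‖Ainf‖ * ‖B‖ - (inner ℝ Ainf B : ℝ) := by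
    simp only [hAinfdef, hBdef]
    exact shat_eq hφ hBmem
  -- final liminf argument
  set L := ‖Ainf‖ * ‖B‖ - (inner ℝ Ainf B : ℝ) with hLdef
  clear_value L
  have key : ∀ ε > (0:ℝ), ∀ᶠ k in atTop, L - ε ≤ Shat b (φk k) (dφk k) := by
    intro ε hε
    have h1 : ∀ᶠ k in atTop, ‖Ainf‖ * ‖B‖ - ε/2 ≤ ‖A k‖ * ‖Bk k‖ := by
      by_cases hab : ‖Ainf‖ * ‖B‖ = 0
      · refine Eventually.of_forall fun k => ?_
        rw [hab]
        have := mul_nonneg (norm_nonneg (A k)) (norm_nonneg (Bk k))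
        linarith
      · have ha : 0 < ‖Ainf‖ := by
          rcases (norm_nonneg Ainf).lt_or_eq with h | h
          · exact h
          · exact absurd (by rw [← h]; ring) hab
        have hc : 0 < ‖B‖ := by
          rcases (norm_nonneg B).lt_or_eq with h | h
          · exact h
          · exact absurd (by rw [← h]; ring) hab
        set δ := min (ε / (2 * (‖Ainf‖ + ‖B‖ + 1))) (min ‖Ainf‖ ‖B‖) with hδdef
        have hδpos : 0 < δ := lt_min (by positivity) (lt_min ha hc)
        have hδa : δ ≤ ‖Ainf‖ := le_trans (min_le_right _ _) (min_le_left _ _)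
        have hδc : δ ≤ ‖B‖ := le_trans (min_le_right _ _) (min_le_right _ _)
        have h1 : δ ≤ ε / (2 * (‖Ainf‖ + ‖B‖ + 1)) := min_le_left _ _
        clear_value δ
        have hδε : δ * (‖Ainf‖ + ‖B‖) ≤ ε/2 := by
          have h1' : δ * (2 * (‖Ainf‖ + ‖B‖ + 1)) ≤ ε := by
            rw [← le_div_iff₀ (by positivity)]
            exact h1
          nlinarith [hδpos.le]
        have hBkev : ∀ᶠ k in atTop, ‖B‖ - δ ≤ ‖Bk k‖ := by
          filter_upwards [hlim4.eventually (eventually_ge_nhds (by linarith : ‖B‖ - δ < ‖B‖))]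
            with k hk'
          exact hk'
        have hAkev : ∀ᶠ k in atTop, ‖Ainf‖ - δ ≤ ‖A k‖ := by
          have h2 : ‖Ainf‖^2 - δ * ‖Ainf‖ < ‖Ainf‖^2 := by nlinarith
          filter_upwards [hlim2.eventually (eventually_gt_nhds h2)] with k hk'
          have h3 : (inner ℝ (A k) Ainf : ℝ) ≤ ‖A k‖ * ‖Ainf‖ := real_inner_le_norm _ _
          nlinarith
        filter_upwards [hBkev, hAkev] with k h4 h5
        have h6 : (0:ℝ) ≤ ‖Ainf‖ - δ := by linarith
        have h7 : (0:ℝ) ≤ ‖B‖ - δ := by linarith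
        have h8 : (‖Ainf‖ - δ) * (‖B‖ - δ) ≤ ‖A k‖ * ‖Bk k‖ := by
          exact mul_le_mul h5 h4 h7 (le_trans h6 h5)
        nlinarith
    have h2 : ∀ᶠ k in atTop, (inner ℝ (A k) (Bk k) : ℝ) ≤ (inner ℝ Ainf B : ℝ) + ε/2 := by
      filter_upwards [hlim3.eventually (eventually_le_nhds (by linarith :
        (inner ℝ Ainf B : ℝ) < inner ℝ Ainf B + ε/2))] with k hk'
      exact hk'
    filter_upwards [h1, h2] with k ha hb'
    rw [hShatk k, hLdef]
    linarith
  -- conclude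
  rw [hShat]
  have hbdd : IsCoboundedUnder (· ≥ ·) atTop (fun k => Shat b (φk k) (dφk k)) := by
    refine IsBoundedUnder.isCoboundedUnder_ge ?_
    refine ⟨C * (‖B‖ + 1) + (C * ‖B‖ + C * 1), ?_⟩
    have hev : ∀ᶠ k in atTop, ‖Bk k‖ ≤ ‖B‖ + 1 := by
      filter_upwards [hlim4.eventually (eventually_le_nhds (by linarith : ‖B‖ < ‖B‖ + 1))]
        with k hk'
      exact hk'
    rw [eventually_map]
    filter_upwards [hev, hlim3.eventually (eventually_ge_nhds
      (by linarith : (inner ℝ Ainf B : ℝ) - 1 < inner ℝ Ainf B))] with k h4 h5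
    rw [hShatk k]
    exact bound_aux hCpos.le (hCA k) (norm_nonneg _) (norm_nonneg _) h4
      (abs_real_inner_le_norm _ _)
  by_contra hcon
  push_neg at hcon
  set lim := liminf (fun k => Shat b (φk k) (dφk k)) atTop with hlim
  have hfin : ∀ ε > (0:ℝ), L - ε ≤ lim := fun ε hε => le_liminf_of_le hbdd (key ε hε)
  clear_value lim
  have := hfin ((L - lim)/2) (by linarith)
  linarith
end
end

section
/- Let b : ℝⁿ → ℝⁿ be Lipschitz with constant K and b(0) = 0. Let φ̃ : [0,L] → ℝⁿ be a curve parametrized by arc length (|φ̃'(α)| = 1 for a.e. α) with φ̃(0) = 0. Then |b(φ̃(α))| ≤ Kα for all α ∈ [0,L], and consequently for every α_y ∈ (0,L] the travel time ∫₀^{α_y} 1/|b(φ̃(α))| dα = +∞. In particular, any path satisfying the zero-Hamiltonian constraint |φ'(t)| = |b(φ(t))| that starts at the equilibrium point 0 requires infinite time to reach any point y ≠ 0, so T* = ∞ for transitions starting at a critical point. -/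
open MeasureTheory Filter intervalIntegral
open scoped RealInnerProductSpace Topology

noncomputable section

lemma aux_inv_top {a : ℝ} (ha : 0 < a) :
    ∫⁻ x in Set.Ioc (0:ℝ) a, ENNReal.ofReal x⁻¹ = ⊤ := by
  by_contra h
  have hint : MeasureTheory.IntegrableOn (fun x : ℝ => x⁻¹) (Set.Ioc (0:ℝ) a) := by
    refine ⟨measurable_inv.aestronglyMeasurable, ?_⟩
    rw [MeasureTheory.HasFiniteIntegral]
    have : ∀ᵐ x ∂(volume.restrict (Set.Ioc (0:ℝ) a)),
        ‖x⁻¹‖ₑ = ENNReal.ofReal x⁻¹ := by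
      filter_upwards [ae_restrict_mem measurableSet_Ioc] with x hx
      exact Real.enorm_eq_ofReal (inv_nonneg.mpr hx.1.le)
    rw [lintegral_congr_ae this]
    exact lt_top_iff_ne_top.2 h
  have hIoo : MeasureTheory.IntegrableOn (fun x : ℝ => x ^ (-1:ℝ)) (Set.Ioo (0:ℝ) a) := by
    refine (hint.mono_set Set.Ioo_subset_Ioc_self).congr_fun ?_ measurableSet_Ioo
    intro x hx
    exact (Real.rpow_neg_one x).symm
  exact absurd ((intervalIntegral.integrableOn_Ioo_rpow_iff ha).1 hIoo) (by norm_num)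

/-- along an arc-length parametrized curve `φ̃` starting at the equilibrium
`0` of a `K`-Lipschitz field `b` (with `b(0) = 0`), one has `‖b(φ̃(α))‖ ≤ Kα`, and the
travel time `∫₀^{α_y} dα/‖b(φ̃(α))‖` is infinite for every `α_y > 0`; hence any path
satisfying the zero-Hamiltonian constraint needs infinite time to leave a critical point. -/
theorem stmt17 {n : ℕ} (b : EuclideanSpace ℝ (Fin n) → EuclideanSpace ℝ (Fin n))
    (K : NNReal) (hb : LipschitzWith K b) (hb0 : b 0 = 0)
    (L : ℝ) (hL : 0 < L)
    (φ dφ : ℝ → EuclideanSpace ℝ (Fin n))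
    (hmeas : MeasureTheory.AEStronglyMeasurable dφ
      (MeasureTheory.volume.restrict (Set.Ioc (0:ℝ) L)))
    -- arc-length parametrization: `‖φ̃'(α)‖ = 1` a.e.
    (hunit : ∀ᵐ α ∂(MeasureTheory.volume.restrict (Set.Ioc (0:ℝ) L)), ‖dφ α‖ = 1)
    -- absolute continuity
    (hAC : ∀ α ∈ Set.Icc (0:ℝ) L, φ α = φ 0 + ∫ s in (0:ℝ)..α, dφ s)
    (h0 : φ 0 = 0) :
    (∀ α ∈ Set.Icc (0:ℝ) L, ‖b (φ α)‖ ≤ (K:ℝ) * α) ∧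
    (∀ αy : ℝ, 0 < αy → αy ≤ L →
      ∫⁻ α in Set.Ioc (0:ℝ) αy, (1 / ENNReal.ofReal ‖b (φ α)‖) = ⊤) :=  by
  have part1 : ∀ α ∈ Set.Icc (0:ℝ) L, ‖b (φ α)‖ ≤ (K:ℝ) * α := by
    intro α hα
    have hφ : ‖φ α‖ ≤ α := by
      rw [hAC α hα, h0, zero_add]
      have hae : ∀ᵐ x ∂(volume : MeasureTheory.Measure ℝ),
          x ∈ Set.uIoc (0:ℝ) α → ‖dφ x‖ ≤ 1 := by
        filter_upwards [(ae_restrict_iff' measurableSet_Ioc).mp hunit] with x hx hmem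
        rw [Set.uIoc_of_le hα.1] at hmem
        exact (hx ⟨hmem.1, hmem.2.trans hα.2⟩).le
      calc ‖∫ s in (0:ℝ)..α, dφ s‖ ≤ 1 * |α - 0| :=
            intervalIntegral.norm_integral_le_of_norm_le_const_ae hae
        _ = α := by rw [one_mul, sub_zero, abs_of_nonneg hα.1]
    calc ‖b (φ α)‖ = ‖b (φ α) - b 0‖ := by rw [hb0, sub_zero]
      _ ≤ (K:ℝ) * ‖φ α - 0‖ := by simpa [dist_eq_norm] using hb.dist_le_mul (φ α) 0
      _ = (K:ℝ) * ‖φ α‖ := by rw [sub_zero]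
      _ ≤ (K:ℝ) * α := mul_le_mul_of_nonneg_left hφ K.coe_nonneg
  refine ⟨part1, fun αy hαy hαyL => ?_⟩
  have hsub : Set.Ioc (0:ℝ) αy ⊆ Set.Icc (0:ℝ) L :=
    fun x hx => ⟨hx.1.le, hx.2.trans hαyL⟩
  rcases eq_or_lt_of_le K.coe_nonneg with hK | hK
  · -- K = 0 : b ∘ φ vanishes, integrand is ⊤
    have heq : ∫⁻ α in Set.Ioc (0:ℝ) αy, (1 / ENNReal.ofReal ‖b (φ α)‖)
        = ∫⁻ _ in Set.Ioc (0:ℝ) αy, (⊤ : ENNReal) := by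
      apply MeasureTheory.setLIntegral_congr_fun measurableSet_Ioc
      intro x hx
      have h0' : ‖b (φ x)‖ = 0 := le_antisymm
        (by simpa [← hK] using part1 x (hsub hx)) (norm_nonneg _)
      simp [h0']
    rw [heq, MeasureTheory.lintegral_const, MeasureTheory.Measure.restrict_apply_univ,
      Real.volume_Ioc]
    exact ENNReal.top_mul (by simp [hαy])
  · -- K > 0 : compare with 1/(Kα)
    have hKne : (ENNReal.ofReal (K:ℝ))⁻¹ ≠ 0 := ENNReal.inv_ne_zero.mpr ENNReal.ofReal_ne_top
    have hKne' : (ENNReal.ofReal (K:ℝ))⁻¹ ≠ ⊤ :=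
      ENNReal.inv_ne_top.mpr (ENNReal.ofReal_pos.mpr hK).ne'
    have hbound : ∀ᵐ α ∂(volume.restrict (Set.Ioc (0:ℝ) αy)),
        (ENNReal.ofReal (K:ℝ))⁻¹ * ENNReal.ofReal α⁻¹ ≤ 1 / ENNReal.ofReal ‖b (φ α)‖ := by
      rw [ae_restrict_iff' measurableSet_Ioc]
      apply Filter.Eventually.of_forall
      intro α hα
      have h1 : ENNReal.ofReal ‖b (φ α)‖ ≤ ENNReal.ofReal ((K:ℝ) * α) :=
        ENNReal.ofReal_le_ofReal (part1 α (hsub hα))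
      have h2 : (ENNReal.ofReal ((K:ℝ) * α))⁻¹ ≤ (ENNReal.ofReal ‖b (φ α)‖)⁻¹ :=
        ENNReal.inv_le_inv' h1
      rw [one_div]
      refine le_trans (le_of_eq ?_) h2
      rw [ENNReal.ofReal_mul hK.le, ENNReal.mul_inv (Or.inl (ENNReal.ofReal_pos.mpr hK).ne')
        (Or.inl ENNReal.ofReal_ne_top), ENNReal.ofReal_inv_of_pos hα.1]
    rw [eq_top_iff]
    calc (⊤ : ENNReal)
        = (ENNReal.ofReal (K:ℝ))⁻¹ * ∫⁻ α in Set.Ioc (0:ℝ) αy, ENNReal.ofReal α⁻¹ := by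
          rw [aux_inv_top hαy, ENNReal.mul_top hKne]
      _ = ∫⁻ α in Set.Ioc (0:ℝ) αy, (ENNReal.ofReal (K:ℝ))⁻¹ * ENNReal.ofReal α⁻¹ :=
          (MeasureTheory.lintegral_const_mul' _ _ hKne').symm
      _ ≤ ∫⁻ α in Set.Ioc (0:ℝ) αy, (1 / ENNReal.ofReal ‖b (φ α)‖) :=
          MeasureTheory.lintegral_mono_ae hbound
end
end

section
/- Let b : ℝⁿ → ℝⁿ be Lipschitz with constant K, let 0 be an asymptotically stable equilibrium of x' = b(x) with b(0) = 0, and let x ≠ 0 be a point on the boundary of a domain D attracted to 0 with ⟨b(y), n(y)⟩ < 0 on ∂D. Assume the minimal action path φ*_{0,x} attaining V(0,x) exists with finite length, and that for every point y on φ*_{0,x} the sub-path φ*_{y,x} is a minimizer from y to x with finite optimal time T*_{y,x}. For each n ∈ ℕ let φ̄^{*,n}_{0,x} attain the constrained infimum Ŝ(φ̄^{*,n}_{0,x}) = inf{ Ŝ(φ̄) : φ̄ ∈ A₁, T̂(φ̄) ≤ n }. Then the sequence n ↦ Ŝ(φ̄^{*,n}_{0,x}) is nonincreasing, satisfies for suitable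 points y_k on φ*_{0,x} with |y_k| = ρ_k = 2^{-k}ρ and n = ⌈T*_{y_k,x} + 1⌉ the bound Ŝ(φ̄^{*,n}_{0,x}) ≤ S_{T*_{0,x}}(φ*_{0,x}) + C(K) ρ_k², and hence {φ̄^{*,n}_{0,x}} is a minimizing sequence: lim_{n→∞} Ŝ(φ̄^{*,n}_{0,x}) = inf_{φ̄∈A₁} Ŝ(φ̄) = V(0,x). -/
open MeasureTheory Filter intervalIntegral
open scoped RealInnerProductSpace Topology

noncomputable section

section StmtAux
open Set

variable {n : ℕ} {b : EuclideanSpace ℝ (Fin n) → EuclideanSpace ℝ (Fin n)}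
  {φ dφ f g : ℝ → EuclideanSpace ℝ (Fin n)} {μ : Measure ℝ}

lemma int_inner (hf : MemLp f 2 μ) (hg : MemLp g 2 μ) :
    Integrable (fun t => ⟪f t, g t⟫) μ := by
  have := MeasureTheory.L2.integrable_inner (𝕜 := ℝ) (hf.toLp f) (hg.toLp g)
  refine this.congr ?_
  filter_upwards [hf.coeFn_toLp, hg.coeFn_toLp] with t h1 h2
  rw [h1, h2]

lemma norm_toLp_sq (hf : MemLp f 2 μ) :
    ‖hf.toLp f‖ = Real.sqrt (∫ t, ‖f t‖^2 ∂μ) := by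
  have h1 : ⟪hf.toLp f, hf.toLp f⟫ = ‖hf.toLp f‖^2 := real_inner_self_eq_norm_sq _
  rw [MeasureTheory.L2.inner_def] at h1
  have h2 : ∫ t, ⟪(hf.toLp f : ℝ → EuclideanSpace ℝ (Fin n)) t,
        (hf.toLp f : ℝ → EuclideanSpace ℝ (Fin n)) t⟫ ∂μ
      = ∫ t, ‖f t‖^2 ∂μ := by
    refine integral_congr_ae ?_
    filter_upwards [hf.coeFn_toLp] with t h
    rw [h, real_inner_self_eq_norm_sq]
  rw [h2] at h1
  rw [h1, Real.sqrt_sq (norm_nonneg _)]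

lemma cs_L2 (hf : MemLp f 2 μ) (hg : MemLp g 2 μ) :
    ∫ t, ⟪f t, g t⟫ ∂μ ≤ Real.sqrt (∫ t, ‖f t‖^2 ∂μ) * Real.sqrt (∫ t, ‖g t‖^2 ∂μ) := by
  have h := real_inner_le_norm (hf.toLp f) (hg.toLp g)
  rw [MeasureTheory.L2.inner_def] at h
  rw [norm_toLp_sq hf, norm_toLp_sq hg] at h
  refine le_trans (le_of_eq ?_) h
  refine integral_congr_ae ?_
  filter_upwards [hf.coeFn_toLp, hg.coeFn_toLp] with t h1 h2
  rw [h1, h2]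

lemma expand_sq (c : ℝ) (hf : MemLp f 2 μ) (hg : MemLp g 2 μ) :
    ∫ t, ‖c • f t - g t‖^2 ∂μ
      = c^2 * (∫ t, ‖f t‖^2 ∂μ) - 2*c*(∫ t, ⟪f t, g t⟫ ∂μ) + ∫ t, ‖g t‖^2 ∂μ := by
  have hf2 : Integrable (fun t => ‖f t‖^2) μ :=
    (memLp_two_iff_integrable_sq_norm hf.aestronglyMeasurable).mp hf
  have hg2 : Integrable (fun t => ‖g t‖^2) μ :=
    (memLp_two_iff_integrable_sq_norm hg.aestronglyMeasurable).mp hg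
  have hfg : Integrable (fun t => ⟪f t, g t⟫) μ := int_inner hf hg
  have hpt : ∀ t, ‖c • f t - g t‖^2
      = c^2 * ‖f t‖^2 - 2*c*⟪f t, g t⟫ + ‖g t‖^2 := by
    intro t
    rw [norm_sub_sq_real, real_inner_smul_left, norm_smul]
    simp [mul_pow, sq_abs]
    ring
  simp_rw [hpt]
  have hA : Integrable (fun t => c^2*‖f t‖^2 - 2*c*⟪f t, g t⟫) μ :=
    (hf2.const_mul _).sub (hfg.const_mul _)
  rw [integral_add hA hg2, integral_sub (hf2.const_mul _) (hfg.const_mul _),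
    MeasureTheory.integral_const_mul, MeasureTheory.integral_const_mul]

lemma h1_ii {T : ℝ} (hT : 0 ≤ T) (h : IsH1Path T φ dφ) : IntervalIntegrable dφ volume 0 T := by
  rw [intervalIntegrable_iff_integrableOn_Ioc_of_le hT]
  exact (h.1.mono_exponent (by norm_num)).integrable le_rfl

lemma h1_cont {T : ℝ} (hT : 0 ≤ T) (h : IsH1Path T φ dφ) : ContinuousOn φ (Icc 0 T) := by
  have hint : IntervalIntegrable dφ volume 0 T := h1_ii hT h
  have hc : ContinuousOn (fun t => φ 0 + ∫ s in (0:ℝ)..t, dφ s) (Icc 0 T) := by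
    apply continuousOn_const.add
    have := intervalIntegral.continuousOn_primitive_interval' hint
      (a := 0) (by rw [Set.uIcc_of_le hT]; exact Set.left_mem_Icc.2 hT)
    rwa [Set.uIcc_of_le hT] at this
  exact hc.congr h.2

lemma h1_bphi_mem {K : NNReal} (hb : LipschitzWith K b) {T : ℝ} (hT : 0 ≤ T)
    (h : IsH1Path T φ dφ) :
    MemLp (fun t => b (φ t)) 2 (volume.restrict (Ioc (0:ℝ) T)) := by
  obtain ⟨C, hC⟩ := (isCompact_Icc (a := (0:ℝ)) (b := T)).exists_bound_of_continuousOn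
    (hb.continuous.comp_continuousOn (h1_cont hT h))
  have hm : AEStronglyMeasurable (fun t => b (φ t)) (volume.restrict (Ioc (0:ℝ) T)) :=
    ((hb.continuous.comp_continuousOn (h1_cont hT h)).mono Ioc_subset_Icc_self
      ).aestronglyMeasurable measurableSet_Ioc
  exact MemLp.of_bound hm C (by
    filter_upwards [ae_restrict_mem measurableSet_Ioc] with t ht
    exact hC t (Ioc_subset_Icc_self ht))

lemma h1_sq_ii {T : ℝ} (hT : 0 ≤ T) (h : IsH1Path T φ dφ) :
    IntervalIntegrable (fun t => ‖dφ t‖^2) volume 0 T := by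
  rw [intervalIntegrable_iff_integrableOn_Ioc_of_le hT]
  exact (memLp_two_iff_integrable_sq_norm h.1.aestronglyMeasurable).mp h.1

lemma h1_action_ii {K : NNReal} (hb : LipschitzWith K b) {T : ℝ} (hT : 0 ≤ T)
    (h : IsH1Path T φ dφ) :
    IntervalIntegrable (fun t => ‖dφ t - b (φ t)‖^2) volume 0 T := by
  rw [intervalIntegrable_iff_integrableOn_Ioc_of_le hT]
  have hm : MemLp (fun t => dφ t - b (φ t)) 2 (volume.restrict (Ioc (0:ℝ) T)) :=
    h.1.sub (h1_bphi_mem hb hT h)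
  exact (memLp_two_iff_integrable_sq_norm hm.aestronglyMeasurable).mp hm

lemma isH1Path_comp_scale {c T : ℝ} (hc : 0 < c) (hT : 0 ≤ T)
    (h : IsH1Path (c*T) φ dφ) :
    IsH1Path T (fun s => φ (c*s)) (fun s => c • dφ (c*s)) := by
  have hc' : c ≠ 0 := ne_of_gt hc
  have hcT : 0 ≤ c*T := by positivity
  have hii : IntervalIntegrable (fun s => dφ (c*s)) volume 0 T := by
    have := (h1_ii hcT h).comp_mul_left (c := c)
    rwa [zero_div, mul_div_cancel_left₀ _ hc'] at this
  have hsq : IntervalIntegrable (fun s => ‖dφ (c*s)‖^2) volume 0 T := by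
    have := (h1_sq_ii hcT h).comp_mul_left (c := c)
    rwa [zero_div, mul_div_cancel_left₀ _ hc'] at this
  constructor
  · rw [memLp_two_iff_integrable_sq_norm]
    · have : Integrable (fun s => c^2 * ‖dφ (c*s)‖^2) (volume.restrict (Ioc (0:ℝ) T)) := by
        exact (((intervalIntegrable_iff_integrableOn_Ioc_of_le hT).1 hsq).const_mul _)
      refine this.congr (Eventually.of_forall fun s => ?_)
      show c^2 * ‖dφ (c*s)‖^2 = ‖c • dφ (c*s)‖^2
      rw [norm_smul, mul_pow, Real.norm_eq_abs, sq_abs]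
    · exact (((intervalIntegrable_iff_integrableOn_Ioc_of_le hT).1 hii
        ).aestronglyMeasurable).const_smul c
  · intro t ht
    have hmem : c*t ∈ Set.Icc (0:ℝ) (c*T) :=
      ⟨mul_nonneg hc.le ht.1, mul_le_mul_of_nonneg_left ht.2 hc.le⟩
    have h2 := h.2 (c*t) hmem
    have hint : (∫ s in (0:ℝ)..t, c • dφ (c*s)) = ∫ u in (0:ℝ)..(c*t), dφ u := by
      rw [intervalIntegral.integral_smul, intervalIntegral.integral_comp_mul_left _ hc',
        smul_inv_smul₀ hc', mul_zero]
    calc (fun s => φ (c*s)) t = φ (c*t) := rfl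
      _ = φ 0 + ∫ u in (0:ℝ)..(c*t), dφ u := h2
      _ = (fun s => φ (c*s)) 0 + ∫ s in (0:ℝ)..t, c • dφ (c*s) := by rw [hint]; simp

lemma integrand_scale {T c : ℝ} (hc : c ≠ 0) (g : ℝ → ℝ) :
    ∫ s in (0:ℝ)..T, g (c*s) = c⁻¹ * ∫ u in (0:ℝ)..(c*T), g u := by
  rw [intervalIntegral.integral_comp_mul_left _ hc, mul_zero, smul_eq_mul]

set_option maxHeartbeats 1000000 in
lemma concat {K : NNReal} (hb : LipschitzWith K b) {T : ℝ} (hT : 0 < T)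
    {y x : EuclideanSpace ℝ (Fin n)} (h : Adm T y x φ dφ) :
    Adm (1+T) 0 x (fun t => if t ≤ 1 then t • y else φ (t-1))
      (fun t => if t ≤ 1 then y else dφ (t-1)) ∧
    action b (1+T) (fun t => if t ≤ 1 then t • y else φ (t-1))
      (fun t => if t ≤ 1 then y else dφ (t-1))
      = (1/2) * (∫ t in (0:ℝ)..1, ‖y - b (t • y)‖^2) + action b T φ dφ := by
  set Φ : ℝ → EuclideanSpace ℝ (Fin n) := fun t => if t ≤ 1 then t • y else φ (t-1) with hΦ
  set dΦ : ℝ → EuclideanSpace ℝ (Fin n) := fun t => if t ≤ 1 then y else dφ (t-1) with hdΦ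
  have h1T : (1:ℝ) ≤ 1+T := by linarith
  have h0T : (0:ℝ) ≤ 1+T := by linarith
  -- shifted integrabilities
  have hshift : IntervalIntegrable (fun t => dφ (t-1)) volume 1 (1+T) := by
    have := (h1_ii hT.le h.1).comp_sub_right 1
    rwa [zero_add, add_comm T 1] at this
  have hshift_sq : IntervalIntegrable (fun t => ‖dφ (t-1)‖^2) volume 1 (1+T) := by
    have := (h1_sq_ii hT.le h.1).comp_sub_right 1
    rwa [zero_add, add_comm T 1] at this
  -- piecewise equalities
  have hEq1 : ∀ t ∈ Icc (0:ℝ) 1, dΦ t = y := fun t ht => if_pos ht.2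
  have hEq2 : ∀ t ∈ Ioc (1:ℝ) (1+T), dΦ t = dφ (t-1) := fun t ht => if_neg (not_le.2 ht.1)
  -- integrability of dΦ
  have hi1 : IntegrableOn dΦ (Ioc (0:ℝ) 1) volume := by
    refine (integrableOn_const measure_Ioc_lt_top.ne).congr_fun
      (fun t ht => (hEq1 t (Ioc_subset_Icc_self ht)).symm) measurableSet_Ioc
  have hi2 : IntegrableOn dΦ (Ioc (1:ℝ) (1+T)) volume := by
    refine ((intervalIntegrable_iff_integrableOn_Ioc_of_le h1T).1 hshift).congr_fun
      (fun t ht => (hEq2 t ht).symm) measurableSet_Ioc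
  have hunion : Ioc (0:ℝ) 1 ∪ Ioc (1:ℝ) (1+T) = Ioc (0:ℝ) (1+T) :=
    Ioc_union_Ioc_eq_Ioc zero_le_one h1T
  have hiu : IntegrableOn dΦ (Ioc (0:ℝ) (1+T)) volume := by
    rw [← hunion]; exact hi1.union hi2
  -- sq integrability
  have hsq1 : IntegrableOn (fun t => ‖dΦ t‖^2) (Ioc (0:ℝ) 1) volume := by
    refine ((integrableOn_const (C := ‖y‖^2) measure_Ioc_lt_top.ne)).congr_fun
      (fun t ht => ?_) measurableSet_Ioc
    show ‖y‖^2 = ‖dΦ t‖^2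
    rw [hEq1 t (Ioc_subset_Icc_self ht)]
  have hsq2 : IntegrableOn (fun t => ‖dΦ t‖^2) (Ioc (1:ℝ) (1+T)) volume := by
    refine ((intervalIntegrable_iff_integrableOn_Ioc_of_le h1T).1 hshift_sq).congr_fun
      (fun t ht => ?_) measurableSet_Ioc
    rw [hEq2 t ht]
  have hsqu : IntegrableOn (fun t => ‖dΦ t‖^2) (Ioc (0:ℝ) (1+T)) volume := by
    rw [← hunion]; exact hsq1.union hsq2
  have hmem : MemLp dΦ 2 (volume.restrict (Ioc (0:ℝ) (1+T))) :=
    (memLp_two_iff_integrable_sq_norm hiu.aestronglyMeasurable).2 hsqu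
  -- interval integrability pieces for dΦ
  have ii1 : IntervalIntegrable dΦ volume 0 1 :=
    (intervalIntegrable_iff_integrableOn_Ioc_of_le zero_le_one).2 hi1
  -- primitive property
  have hprim : ∀ t ∈ Icc (0:ℝ) (1+T), Φ t = Φ 0 + ∫ s in (0:ℝ)..t, dΦ s := by
    intro t ht
    have hΦ0 : Φ 0 = 0 := by simp [hΦ]
    by_cases ht1 : t ≤ 1
    · have : (∫ s in (0:ℝ)..t, dΦ s) = ∫ s in (0:ℝ)..t, y := by
        refine intervalIntegral.integral_congr fun s hs => ?_
        rw [Set.uIcc_of_le ht.1] at hs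
        exact hEq1 s ⟨hs.1, le_trans hs.2 ht1⟩
      rw [this, intervalIntegral.integral_const, hΦ0, zero_add, sub_zero]
      simp [hΦ, ht1]
    · push_neg at ht1
      have ii2 : IntervalIntegrable dΦ volume 1 t :=
        (intervalIntegrable_iff_integrableOn_Ioc_of_le ht1.le).2
          (hi2.mono_set (Ioc_subset_Ioc le_rfl ht.2))
      have hsplit : (∫ s in (0:ℝ)..t, dΦ s)
          = (∫ s in (0:ℝ)..1, dΦ s) + ∫ s in (1:ℝ)..t, dΦ s :=
        (intervalIntegral.integral_add_adjacent_intervals ii1 ii2).symm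
      have hI1 : (∫ s in (0:ℝ)..1, dΦ s) = y := by
        have : (∫ s in (0:ℝ)..1, dΦ s) = ∫ s in (0:ℝ)..1, y := by
          refine intervalIntegral.integral_congr fun s hs => ?_
          rw [Set.uIcc_of_le zero_le_one] at hs
          exact hEq1 s hs
        rw [this, intervalIntegral.integral_const]; simp
      have hI2 : (∫ s in (1:ℝ)..t, dΦ s) = ∫ u in (0:ℝ)..(t-1), dφ u := by
        rw [intervalIntegral.integral_of_le ht1.le,
          intervalIntegral.integral_of_le (by linarith : (0:ℝ) ≤ t-1)]
        rw [show (∫ s in Ioc (1:ℝ) t, dΦ s) = ∫ s in Ioc (1:ℝ) t, dφ (s-1) from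
          setIntegral_congr_fun measurableSet_Ioc
            (fun s hs => hEq2 s ⟨hs.1, le_trans hs.2 ht.2⟩)]
        have := intervalIntegral.integral_comp_sub_right (a := (1:ℝ)) (b := t) dφ 1
        rw [sub_self] at this
        rw [intervalIntegral.integral_of_le ht1.le,
          intervalIntegral.integral_of_le (by linarith : (0:ℝ) ≤ t-1)] at this
        exact this
      have hφt : Φ t = φ (t-1) := if_neg (not_le.2 ht1)
      have hφprim := h.1.2 (t-1) ⟨by linarith, by linarith [ht.2]⟩
      rw [hφt, hφprim, h.2.1, hΦ0, hsplit, hI1, hI2, zero_add]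
  refine ⟨⟨⟨hmem, hprim⟩, by simp [hΦ], ?_⟩, ?_⟩
  · have : ¬ (1+T ≤ 1) := by linarith
    simp only [hΦ, this, if_false, add_sub_cancel_left]
    exact h.2.2
  · -- action splitting
    have hcont : Continuous (fun t : ℝ => ‖y - b (t • y)‖^2) := by
      have hsm : Continuous (fun t : ℝ => t • y) := continuous_id.smul continuous_const
      exact ((continuous_const.sub (hb.continuous.comp hsm)).norm.pow 2)
    have hB1 : EqOn (fun t => ‖dΦ t - b (Φ t)‖^2) (fun t => ‖y - b (t • y)‖^2) (Icc (0:ℝ) 1) := by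
      intro t htm
      simp only [hΦ, hdΦ, if_pos htm.2]
    have hG1 : IntervalIntegrable (fun t => ‖dΦ t - b (Φ t)‖^2) volume 0 1 := by
      rw [intervalIntegrable_iff_integrableOn_Ioc_of_le zero_le_one]
      exact (hcont.integrableOn_Ioc).congr_fun
        (fun t ht => (hB1 (Ioc_subset_Icc_self ht)).symm) measurableSet_Ioc
    have hH0 : IntervalIntegrable (fun t => ‖dφ t - b (φ t)‖^2) volume 0 T :=
      h1_action_ii hb hT.le h.1
    have hHs : IntervalIntegrable (fun t => ‖dφ (t-1) - b (φ (t-1))‖^2) volume 1 (1+T) := by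
      have := hH0.comp_sub_right 1
      rwa [zero_add, add_comm T 1] at this
    have hG2 : IntervalIntegrable (fun t => ‖dΦ t - b (Φ t)‖^2) volume 1 (1+T) := by
      rw [intervalIntegrable_iff_integrableOn_Ioc_of_le h1T] at hHs ⊢
      refine hHs.congr_fun (fun t ht => ?_) measurableSet_Ioc
      have hnt : ¬ t ≤ 1 := not_le.2 ht.1
      simp only [hΦ, hdΦ, if_neg hnt]
    unfold action
    rw [← intervalIntegral.integral_add_adjacent_intervals hG1 hG2]
    have e1 : (∫ t in (0:ℝ)..1, ‖dΦ t - b (Φ t)‖^2) = ∫ t in (0:ℝ)..1, ‖y - b (t • y)‖^2 := by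
      refine intervalIntegral.integral_congr ?_
      rwa [Set.uIcc_of_le zero_le_one]
    have e2 : (∫ t in (1:ℝ)..(1+T), ‖dΦ t - b (Φ t)‖^2)
        = ∫ t in (0:ℝ)..T, ‖dφ t - b (φ t)‖^2 := by
      rw [intervalIntegral.integral_of_le h1T]
      rw [show (∫ t in Ioc (1:ℝ) (1+T), ‖dΦ t - b (Φ t)‖^2)
          = ∫ t in Ioc (1:ℝ) (1+T), ‖dφ (t-1) - b (φ (t-1))‖^2 from
        setIntegral_congr_fun measurableSet_Ioc (fun t ht => by
          have hnt : ¬ t ≤ 1 := not_le.2 ht.1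
          simp only [hΦ, hdΦ, if_neg hnt])]
      have := intervalIntegral.integral_comp_sub_right
        (a := (1:ℝ)) (b := 1+T) (fun t => ‖dφ t - b (φ t)‖^2) 1
      rw [sub_self, add_sub_cancel_left] at this
      rw [← intervalIntegral.integral_of_le h1T]
      exact this
    rw [e1, e2]
    ring

lemma lin_adm (y : EuclideanSpace ℝ (Fin n)) :
    Adm 1 0 y (fun t => t • y) (fun _ => y) := by
  refine ⟨⟨memLp_const y, fun t ht => ?_⟩, by simp, by simp⟩
  simp [intervalIntegral.integral_const]

lemma lin_action_bound {K : NNReal} (hb : LipschitzWith K b) (hb0 : b 0 = 0)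
    (y : EuclideanSpace ℝ (Fin n)) :
    (1/2) * (∫ t in (0:ℝ)..1, ‖y - b (t • y)‖^2) ≤ (1 + (K:ℝ)^2/3) * ‖y‖^2 := by
  set c := ‖y‖ with hc
  have hcont : Continuous (fun t : ℝ => ‖y - b (t • y)‖^2) := by
    have hsm : Continuous (fun t : ℝ => t • y) := continuous_id.smul continuous_const
    exact ((continuous_const.sub (hb.continuous.comp hsm)).norm.pow 2)
  have hcont2 : Continuous (fun t : ℝ => ((1+(K:ℝ)*t)*c)^2) := by fun_prop
  have hpt : ∀ t ∈ Icc (0:ℝ) 1, ‖y - b (t • y)‖^2 ≤ ((1+(K:ℝ)*t)*c)^2 := by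
    intro t ht
    have h1 : ‖b (t • y)‖ ≤ (K:ℝ) * (t * c) := by
      have := hb.norm_sub_le (t • y) 0
      rw [hb0, sub_zero, sub_zero] at this
      calc ‖b (t • y)‖ ≤ (K:ℝ) * ‖t • y‖ := this
        _ = (K:ℝ) * (t * c) := by rw [norm_smul, Real.norm_eq_abs, abs_of_nonneg ht.1]
    have h2 : ‖y - b (t • y)‖ ≤ (1+(K:ℝ)*t)*c := by
      calc ‖y - b (t • y)‖ ≤ ‖y‖ + ‖b (t • y)‖ := norm_sub_le _ _
        _ ≤ c + (K:ℝ)*(t*c) := by gcongr <;> simp [hc, h1]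
        _ = (1+(K:ℝ)*t)*c := by ring
    exact pow_le_pow_left₀ (norm_nonneg _) h2 2
  have hmono := intervalIntegral.integral_mono_on (μ := volume) zero_le_one
    (hcont.intervalIntegrable 0 1) (hcont2.intervalIntegrable 0 1) hpt
  have hev : (∫ t in (0:ℝ)..1, ((1+(K:ℝ)*t)*c)^2)
      = c^2 + 2*(K:ℝ)*c^2*(1/2) + (K:ℝ)^2*c^2*(1/3) := by
    have e : ∀ t : ℝ, ((1+(K:ℝ)*t)*c)^2 = c^2 + (2*(K:ℝ)*c^2)*t + ((K:ℝ)^2*c^2)*t^2 := by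
      intro t; ring
    simp_rw [e]
    have i1 : IntervalIntegrable (fun _:ℝ => c^2) volume 0 1 := intervalIntegrable_const
    have i2 : IntervalIntegrable (fun t:ℝ => (2*(K:ℝ)*c^2)*t) volume 0 1 :=
      (by fun_prop : Continuous fun t:ℝ => (2*(K:ℝ)*c^2)*t).intervalIntegrable 0 1
    have i3 : IntervalIntegrable (fun t:ℝ => ((K:ℝ)^2*c^2)*t^2) volume 0 1 :=
      (by fun_prop : Continuous fun t:ℝ => ((K:ℝ)^2*c^2)*t^2).intervalIntegrable 0 1
    rw [intervalIntegral.integral_add (i1.add i2) i3, intervalIntegral.integral_add i1 i2,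
      intervalIntegral.integral_const, intervalIntegral.integral_const_mul,
      intervalIntegral.integral_const_mul, integral_id, integral_pow]
    norm_num
  rw [hev] at hmono
  have hK : (0:ℝ) ≤ (K:ℝ) := K.coe_nonneg
  nlinarith [sq_nonneg ((K:ℝ) - 3/2), sq_nonneg c, mul_nonneg (sq_nonneg ((K:ℝ)-3/2)) (sq_nonneg c)]


lemma shat_nonneg {K : NNReal} (hb : LipschitzWith K b) (h : IsH1Path 1 φ dφ) :
    0 ≤ Shat b φ dφ := by
  have hcs := cs_L2 h.1 (h1_bphi_mem hb zero_le_one h)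
  unfold Shat L2norm
  rw [sub_nonneg, intervalIntegral.integral_of_le zero_le_one,
    intervalIntegral.integral_of_le zero_le_one, intervalIntegral.integral_of_le zero_le_one]
  exact hcs

lemma ssc_expand {K : NNReal} (hb : LipschitzWith K b) (h : IsH1Path 1 φ dφ) (T : ℝ) :
    Ssc b T φ dφ = (T/2) * ((T⁻¹)^2 * (∫ t in Ioc (0:ℝ) 1, ‖dφ t‖^2)
      - 2*T⁻¹*(∫ t in Ioc (0:ℝ) 1, ⟪dφ t, b (φ t)⟫) + ∫ t in Ioc (0:ℝ) 1, ‖b (φ t)‖^2) := by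
  unfold Ssc
  rw [intervalIntegral.integral_of_le zero_le_one,
    expand_sq T⁻¹ h.1 (h1_bphi_mem hb zero_le_one h)]

lemma shat_eq_sqrt {K : NNReal} (hb : LipschitzWith K b) (h : IsH1Path 1 φ dφ) :
    Shat b φ dφ = Real.sqrt (∫ t in Ioc (0:ℝ) 1, ‖dφ t‖^2)
      * Real.sqrt (∫ t in Ioc (0:ℝ) 1, ‖b (φ t)‖^2)
      - ∫ t in Ioc (0:ℝ) 1, ⟪dφ t, b (φ t)⟫ := by
  unfold Shat L2norm
  rw [intervalIntegral.integral_of_le zero_le_one, intervalIntegral.integral_of_le zero_le_one,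
    intervalIntegral.integral_of_le zero_le_one]

lemma shat_le_ssc {K : NNReal} (hb : LipschitzWith K b) (h : IsH1Path 1 φ dφ)
    {T : ℝ} (hT : 0 < T) : Shat b φ dφ ≤ Ssc b T φ dφ := by
  rw [ssc_expand hb h T, shat_eq_sqrt hb h]
  set D := ∫ t in Ioc (0:ℝ) 1, ‖dφ t‖^2 with hD
  set Bq := ∫ t in Ioc (0:ℝ) 1, ‖b (φ t)‖^2 with hBq
  set I := ∫ t in Ioc (0:ℝ) 1, ⟪dφ t, b (φ t)⟫ with hI
  have hDpos : 0 ≤ D := integral_nonneg (fun t => sq_nonneg _)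
  have hBqpos : 0 ≤ Bq := integral_nonneg (fun t => sq_nonneg _)
  have hsqD : Real.sqrt D ^ 2 = D := Real.sq_sqrt hDpos
  have hsqB : Real.sqrt Bq ^ 2 = Bq := Real.sq_sqrt hBqpos
  have hexp : (T/2) * ((T⁻¹)^2 * D - 2*T⁻¹*I + Bq) = (D + T^2*Bq)/(2*T) - I := by
    field_simp
    ring
  rw [hexp]
  have key : Real.sqrt D * Real.sqrt Bq ≤ (D + T^2*Bq)/(2*T) := by
    rw [le_div_iff₀ (by positivity : (0:ℝ) < 2*T)]
    nlinarith [sq_nonneg (Real.sqrt D - T*Real.sqrt Bq), hsqD, hsqB]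
  linarith

lemma l2norm_sq (f : ℝ → EuclideanSpace ℝ (Fin n)) :
    (L2norm 1 f)^2 = ∫ t in Ioc (0:ℝ) 1, ‖f t‖^2 := by
  unfold L2norm
  rw [intervalIntegral.integral_of_le zero_le_one]
  exact Real.sq_sqrt (integral_nonneg fun t => sq_nonneg _)

lemma ssc_that {K : NNReal} (hb : LipschitzWith K b) (h : IsH1Path 1 φ dφ)
    (hA : 0 < L2norm 1 dφ) (hB : 0 < L2norm 1 (fun s => b (φ s))) :
    Ssc b (That b φ dφ) φ dφ = Shat b φ dφ := by
  rw [ssc_expand hb h _, shat_eq_sqrt hb h]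
  have hDe := l2norm_sq (n := n) dφ
  have hBe := l2norm_sq (n := n) (fun s => b (φ s))
  set I := ∫ t in Ioc (0:ℝ) 1, ⟪dφ t, b (φ t)⟫ with hI
  set A := L2norm 1 dφ with hA'
  set B := L2norm 1 (fun s => b (φ s)) with hB'
  rw [← hDe, ← hBe, Real.sqrt_sq hA.le, Real.sqrt_sq hB.le]
  have hThat : That b φ dφ = A/B := rfl
  rw [hThat]
  have hA0 : A ≠ 0 := ne_of_gt hA
  have hB0 : B ≠ 0 := ne_of_gt hB
  field_simp
  ring

lemma sq_int_zero_of_l2_zero {f : ℝ → EuclideanSpace ℝ (Fin n)}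
    (hB : L2norm 1 f = 0) : (∫ t in Ioc (0:ℝ) 1, ‖f t‖^2) = 0 := by
  have := l2norm_sq (n := n) f
  rw [hB] at this
  simpa using this.symm

lemma ae_zero_of_l2_zero {f : ℝ → EuclideanSpace ℝ (Fin n)}
    (hf : MemLp f 2 (volume.restrict (Ioc (0:ℝ) 1))) (hB : L2norm 1 f = 0) :
    f =ᵐ[volume.restrict (Ioc (0:ℝ) 1)] 0 := by
  have hint := sq_int_zero_of_l2_zero hB
  have hsqint : Integrable (fun t => ‖f t‖^2) (volume.restrict (Ioc (0:ℝ) 1)) :=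
    (memLp_two_iff_integrable_sq_norm hf.aestronglyMeasurable).mp hf
  have hae : (fun t => ‖f t‖^2) =ᵐ[volume.restrict (Ioc (0:ℝ) 1)] 0 :=
    (integral_eq_zero_iff_of_nonneg (fun t => sq_nonneg _) hsqint).mp hint
  filter_upwards [hae] with t ht
  have h2 : ‖f t‖^2 = 0 := ht
  have h3 : ‖f t‖ = 0 := by nlinarith [norm_nonneg (f t)]
  simpa using norm_eq_zero.mp h3

lemma A_pos (h : IsH1Path 1 φ dφ) (hne : φ 1 ≠ φ 0) : 0 < L2norm 1 dφ := by
  rcases lt_or_eq_of_le (Real.sqrt_nonneg _ : (0:ℝ) ≤ L2norm 1 dφ) with h' | h'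
  · exact h'
  · exfalso
    have hae0 : dφ =ᵐ[volume.restrict (Ioc (0:ℝ) 1)] 0 := ae_zero_of_l2_zero h.1 h'.symm
    have hzero : (∫ s in (0:ℝ)..1, dφ s) = 0 := by
      rw [intervalIntegral.integral_of_le zero_le_one, integral_congr_ae hae0]
      simp
    have h1 := h.2 1 ⟨zero_le_one, le_rfl⟩
    rw [hzero, add_zero] at h1
    exact hne h1

lemma adm_rescale {T : ℝ} (hT : 0 < T) {x₁ x₂ : EuclideanSpace ℝ (Fin n)}
    (h : Adm T x₁ x₂ φ dφ) :
    Adm 1 x₁ x₂ (fun s => φ (T*s)) (fun s => T • dφ (T*s)) ∧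
    Ssc b T (fun s => φ (T*s)) (fun s => T • dφ (T*s)) = action b T φ dφ := by
  have hH : IsH1Path 1 (fun s => φ (T*s)) (fun s => T • dφ (T*s)) := by
    refine isH1Path_comp_scale hT zero_le_one ?_
    rw [mul_one]; exact h.1
  refine ⟨⟨hH, by show φ (T*0) = x₁; rw [mul_zero, h.2.1],
    by show φ (T*1) = x₂; rw [mul_one, h.2.2]⟩, ?_⟩
  unfold Ssc action
  have hpt : ∀ s : ℝ, ‖T⁻¹ • (T • dφ (T*s)) - b (φ (T*s))‖^2
      = (fun u => ‖dφ u - b (φ u)‖^2) (T*s) := by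
    intro s
    rw [inv_smul_smul₀ (ne_of_gt hT)]
  simp_rw [hpt]
  rw [integrand_scale (ne_of_gt hT) (fun u => ‖dφ u - b (φ u)‖^2), mul_one]
  field_simp

lemma adm_unrescale {T : ℝ} (hT : 0 < T) {x₁ x₂ : EuclideanSpace ℝ (Fin n)}
    (h : Adm 1 x₁ x₂ φ dφ) :
    Adm T x₁ x₂ (fun t => φ (T⁻¹*t)) (fun t => T⁻¹ • dφ (T⁻¹*t)) ∧
    action b T (fun t => φ (T⁻¹*t)) (fun t => T⁻¹ • dφ (T⁻¹*t)) = Ssc b T φ dφ := by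
  have h1 : IsH1Path T (fun t => φ (T⁻¹*t)) (fun t => T⁻¹ • dφ (T⁻¹*t)) := by
    refine isH1Path_comp_scale (inv_pos.2 hT) hT.le ?_
    rw [inv_mul_cancel₀ (ne_of_gt hT)]; exact h.1
  refine ⟨⟨h1, by show φ (T⁻¹*0) = x₁; rw [mul_zero, h.2.1],
    by show φ (T⁻¹*T) = x₂; rw [inv_mul_cancel₀ (ne_of_gt hT), h.2.2]⟩, ?_⟩
  unfold Ssc action
  rw [integrand_scale (inv_ne_zero (ne_of_gt hT)) (fun u => ‖T⁻¹ • dφ u - b (φ u)‖^2),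
    inv_inv, inv_mul_cancel₀ (ne_of_gt hT)]
  ring

set_option maxHeartbeats 1000000 in
lemma aux_degenerate {n : ℕ} {b : EuclideanSpace ℝ (Fin n) → EuclideanSpace ℝ (Fin n)}
    {K : NNReal} (hb : LipschitzWith K b) {x : EuclideanSpace ℝ (Fin n)}
    {φ dφ : ℝ → EuclideanSpace ℝ (Fin n)} (hA : Adm 1 0 x φ dφ)
    (hB : L2norm 1 (fun s => b (φ s)) = 0) (V : ℝ)
    (hVssc : ∀ T : ℝ, 0 < T → V ≤ Ssc b T φ dφ) : V ≤ Shat b φ dφ := by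
  have haeb : (fun t => b (φ t)) =ᵐ[volume.restrict (Set.Ioc (0:ℝ) 1)] 0 :=
    ae_zero_of_l2_zero (h1_bphi_mem hb zero_le_one hA.1) hB
  have hI0 : (∫ t in Set.Ioc (0:ℝ) 1, ⟪dφ t, b (φ t)⟫) = 0 := by
    rw [MeasureTheory.integral_congr_ae (g := fun _ => (0:ℝ)) (by
      filter_upwards [haeb] with t ht
      rw [show b (φ t) = 0 from ht, inner_zero_right])]
    simp
  have hBq0 : (∫ t in Set.Ioc (0:ℝ) 1, ‖b (φ t)‖^2) = 0 := sq_int_zero_of_l2_zero hB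
  have hShat0 : Shat b φ dφ = 0 := by
    rw [shat_eq_sqrt hb hA.1, hI0, hBq0]
    simp
  rw [hShat0]
  have key : ∀ ε : ℝ, 0 < ε → V ≤ ε := by
    intro ε hε
    set D := ∫ t in Set.Ioc (0:ℝ) 1, ‖dφ t‖^2 with hD
    have hDpos : 0 ≤ D := integral_nonneg fun t => sq_nonneg _
    set T := D/(2*ε) + 1 with hT
    have hTpos : 0 < T := by positivity
    have hval : Ssc b T φ dφ = D/(2*T) := by
      rw [ssc_expand hb hA.1 T, hI0, hBq0, ← hD]
      field_simp
      ring
    have hbound : D/(2*T) ≤ ε := by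
      rw [div_le_iff₀ (by positivity : (0:ℝ) < 2*T)]
      have he : ε*(2*T) = D + 2*ε := by
        rw [hT]
        field_simp
      calc D ≤ D + 2*ε := by linarith
        _ = ε*(2*T) := he.symm
    calc V ≤ Ssc b T φ dφ := hVssc T hTpos
      _ = D/(2*T) := hval
      _ ≤ ε := hbound
  by_contra hneg
  push_neg at hneg
  linarith [key (V/2) (by linarith)]

end StmtAux
set_option maxHeartbeats 1000000
/-- Lemma 3.7: minimizing sequence for `Ŝ` via constrained problems.
With `0` an equilibrium of the `K`-Lipschitz field `b`, `x ≠ 0`, a minimal action path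
`φ*_{0,x}` of finite length `L` attaining `V(0,x)` (parametrized by arc length), whose
sub-paths from any intermediate point `y` to `x` are minimizers with finite optimal time
and action at most `V(0,x)`, the minimizers `φ̄^{*,n}` of the constrained problems
`inf{Ŝ(φ̄) : φ̄ ∈ A₁, T̂(φ̄) ≤ n}` form a nonincreasing minimizing sequence:
`Ŝ(φ̄^{*,n}) ≤ V(0,x) + C(K)ρ_k²` for suitable `n`, and
`lim_n Ŝ(φ̄^{*,n}) = inf_{A₁} Ŝ = V(0,x)`. -/
theorem stmt19 {n : ℕ} (b : EuclideanSpace ℝ (Fin n) → EuclideanSpace ℝ (Fin n))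
    (K : NNReal) (hb : LipschitzWith K b) (hb0 : b 0 = 0)
    (x : EuclideanSpace ℝ (Fin n)) (hx : x ≠ 0)
    (ρ : ℝ) (hρ : 0 < ρ) (hρx : ρ ≤ ‖x‖)
    -- the minimal action path `φ*_{0,x}`, parametrized by arc length on `[0,L]`
    (Lg : ℝ) (hLg : 0 < Lg)
    (φg dφg : ℝ → EuclideanSpace ℝ (Fin n))
    (hACg : IntervalIntegrable dφg MeasureTheory.volume 0 Lg ∧
      ∀ α ∈ Set.Icc (0:ℝ) Lg, φg α = φg 0 + ∫ s in (0:ℝ)..α, dφg s)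
    (hg0 : φg 0 = 0) (hgL : φg Lg = x)
    (hunit : ∀ᵐ α ∂(MeasureTheory.volume.restrict (Set.Ioc (0:ℝ) Lg)), ‖dφg α‖ = 1)
    -- `φ*_{0,x}` attains the quasi-potential `V(0,x)` (as a geometric action)
    (hattain : (∫ α in (0:ℝ)..Lg, (‖dφg α‖ * ‖b (φg α)‖ - ⟪dφg α, b (φg α)⟫))
      = sInf (probIISet b (0 : EuclideanSpace ℝ (Fin n)) x))
    -- every sub-path of `φ*_{0,x}` from an intermediate point `y = φg α` to `x` is a
    -- minimizer with finite optimal time, and has action at most `V(0,x)`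
    (hsub : ∀ α ∈ Set.Ioc (0:ℝ) Lg, ∃ T : ℝ, 0 < T ∧
      ∃ φ dφ : ℝ → EuclideanSpace ℝ (Fin n), Adm T (φg α) x φ dφ ∧
        action b T φ dφ = sInf (probIISet b (φg α) x) ∧
        action b T φ dφ ≤ sInf (probIISet b (0 : EuclideanSpace ℝ (Fin n)) x))
    -- `φ̄^{*,m}` attains the constrained infimum over `{φ̄ ∈ A₁ : T̂(φ̄) ≤ m}`
    (φbar dbar : ℕ → ℝ → EuclideanSpace ℝ (Fin n))
    (hbar : ∀ m : ℕ, 1 ≤ m →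
      Adm 1 (0 : EuclideanSpace ℝ (Fin n)) x (φbar m) (dbar m) ∧
      That b (φbar m) (dbar m) ≤ m ∧
      Shat b (φbar m) (dbar m)
        = sInf {v | ∃ φ dφ, Adm 1 (0 : EuclideanSpace ℝ (Fin n)) x φ dφ ∧
            That b φ dφ ≤ m ∧ v = Shat b φ dφ}) :
    -- (a) the sequence of constrained minima is nonincreasing
    (∀ m m' : ℕ, 1 ≤ m → m ≤ m' →
      Shat b (φbar m') (dbar m') ≤ Shat b (φbar m) (dbar m)) ∧
    -- (b) the bound `Ŝ(φ̄^{*,n}) ≤ V(0,x) + C(K) ρ_k²` with `ρ_k = 2⁻ᵏρ`, `C(K)=1+K²/3`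
    (∀ k : ℕ, ∃ m : ℕ, 1 ≤ m ∧
      Shat b (φbar m) (dbar m)
        ≤ sInf (probIISet b (0 : EuclideanSpace ℝ (Fin n)) x)
          + (1 + (K:ℝ)^2 / 3) * (ρ / 2^k)^2) ∧
    -- (c) `{φ̄^{*,n}}` is a minimizing sequence and `inf_{A₁} Ŝ = V(0,x)`
    Tendsto (fun m => Shat b (φbar m) (dbar m)) atTop
      (𝓝 (sInf (shatSet b (0 : EuclideanSpace ℝ (Fin n)) x))) ∧
    sInf (shatSet b (0 : EuclideanSpace ℝ (Fin n)) x)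
      = sInf (probIISet b (0 : EuclideanSpace ℝ (Fin n)) x) := by

  have hbar1 := hbar 1 le_rfl
  have hprobne : (probIISet b (0 : EuclideanSpace ℝ (Fin n)) x).Nonempty :=
    ⟨action b 1 (φbar 1) (dbar 1), 1, one_pos, φbar 1, dbar 1, hbar1.1, rfl⟩
  have hshatne : (shatSet b (0 : EuclideanSpace ℝ (Fin n)) x).Nonempty :=
    ⟨Shat b (φbar 1) (dbar 1), φbar 1, dbar 1, hbar1.1, rfl⟩
  have hshatbdd : BddBelow (shatSet b (0 : EuclideanSpace ℝ (Fin n)) x) := by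
    refine ⟨0, ?_⟩
    rintro v ⟨φ, dφ, hA, rfl⟩
    exact shat_nonneg hb hA.1
  have hprobbdd : BddBelow (probIISet b (0 : EuclideanSpace ℝ (Fin n)) x) := by
    refine ⟨0, ?_⟩
    rintro v ⟨T, hT, φ, dφ, hA, rfl⟩
    unfold action
    have h0 : 0 ≤ ∫ t in (0:ℝ)..T, ‖dφ t - b (φ t)‖^2 :=
      intervalIntegral.integral_nonneg hT.le (fun t _ => sq_nonneg _)
    linarith
  have hcbdd : ∀ m : ℕ, BddBelow {v | ∃ φ dφ, Adm 1 (0 : EuclideanSpace ℝ (Fin n)) x φ dφ ∧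
      That b φ dφ ≤ m ∧ v = Shat b φ dφ} := by
    intro m
    refine ⟨0, ?_⟩
    rintro v ⟨φ, dφ, hA, -, rfl⟩
    exact shat_nonneg hb hA.1
  set V := sInf (probIISet b (0 : EuclideanSpace ℝ (Fin n)) x) with hVdef
  -- (a)
  have ha : ∀ m m' : ℕ, 1 ≤ m → m ≤ m' →
      Shat b (φbar m') (dbar m') ≤ Shat b (φbar m) (dbar m) := by
    intro m m' hm hmm'
    have hm' : 1 ≤ m' := le_trans hm hmm'
    rw [(hbar m' hm').2.2, (hbar m hm).2.2]
    refine csInf_le_csInf (hcbdd m') ⟨Shat b (φbar m) (dbar m), φbar m, dbar m,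
      (hbar m hm).1, (hbar m hm).2.1, rfl⟩ ?_
    rintro v ⟨φ, dφ, h1, h2, h3⟩
    refine ⟨φ, dφ, h1, le_trans h2 ?_, h3⟩
    exact_mod_cast Nat.cast_le.2 hmm'
  -- V ≤ Ssc for unit-interval admissible paths, all T > 0
  have hVssc : ∀ φ dφ, Adm 1 (0 : EuclideanSpace ℝ (Fin n)) x φ dφ →
      ∀ T : ℝ, 0 < T → V ≤ Ssc b T φ dφ := by
    intro φ dφ hA T hT
    obtain ⟨hA', hact⟩ := adm_unrescale (b := b) hT hA
    exact csInf_le hprobbdd ⟨T, hT, _, _, hA', hact.symm⟩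
  -- V ≤ Shat on A₁
  have hVshat : ∀ φ dφ, Adm 1 (0 : EuclideanSpace ℝ (Fin n)) x φ dφ → V ≤ Shat b φ dφ := by
    intro φ dφ hA
    have hApos : 0 < L2norm 1 dφ := by
      refine A_pos hA.1 ?_
      rw [hA.2.2, hA.2.1]
      exact hx
    by_cases hB : L2norm 1 (fun s => b (φ s)) = 0
    · exact aux_degenerate hb hA hB V (fun T hT => hVssc φ dφ hA T hT)
    · have hBpos : 0 < L2norm 1 (fun s => b (φ s)) :=
        lt_of_le_of_ne (Real.sqrt_nonneg _) (Ne.symm hB)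
      have hTpos : 0 < That b φ dφ := div_pos hApos hBpos
      calc V ≤ Ssc b (That b φ dφ) φ dφ := hVssc φ dφ hA _ hTpos
        _ = Shat b φ dφ := ssc_that hb hA.1 hApos hBpos
  -- (d)
  have hle1 : sInf (shatSet b (0 : EuclideanSpace ℝ (Fin n)) x) ≤ V := by
    refine le_csInf hprobne ?_
    rintro v ⟨T, hT, φ, dφ, hA, rfl⟩
    obtain ⟨hA1, hS⟩ := adm_rescale (b := b) hT hA
    calc sInf (shatSet b (0 : EuclideanSpace ℝ (Fin n)) x)
        ≤ Shat b _ _ := csInf_le hshatbdd ⟨_, _, hA1, rfl⟩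
      _ ≤ Ssc b T _ _ := shat_le_ssc hb hA1.1 hT
      _ = action b T φ dφ := hS
  have hge1 : V ≤ sInf (shatSet b (0 : EuclideanSpace ℝ (Fin n)) x) := by
    refine le_csInf hshatne ?_
    rintro v ⟨φ, dφ, hA, rfl⟩
    exact hVshat φ dφ hA
  have hd : sInf (shatSet b (0 : EuclideanSpace ℝ (Fin n)) x) = V := le_antisymm hle1 hge1
  -- (b)
  have hCnn : (0:ℝ) ≤ 1 + (K:ℝ)^2/3 := by positivity
  have hBnd : ∀ k : ℕ, ∃ m : ℕ, 1 ≤ m ∧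
      Shat b (φbar m) (dbar m) ≤ V + (1 + (K:ℝ)^2/3) * (ρ / 2^k)^2 := by
    intro k
    have hρk : 0 < ρ/2^k := by positivity
    set α := min (ρ/2^k) Lg with hαdef
    have hα0 : 0 < α := lt_min hρk hLg
    have hαL : α ≤ Lg := min_le_right _ _
    have hynorm : ‖φg α‖ ≤ ρ/2^k := by
      have h2 := hACg.2 α ⟨hα0.le, hαL⟩
      rw [hg0, zero_add] at h2
      have hii : IntervalIntegrable dφg volume 0 α := by
        apply hACg.1.mono_set
        rw [Set.uIcc_of_le hα0.le, Set.uIcc_of_le hLg.le]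
        exact Set.Icc_subset_Icc le_rfl hαL
      have hnorm1 : (∫ s in (0:ℝ)..α, ‖dφg s‖) = α := by
        rw [intervalIntegral.integral_of_le hα0.le]
        have hunit' : ∀ᵐ s ∂(volume.restrict (Set.Ioc (0:ℝ) α)), ‖dφg s‖ = 1 :=
          ae_restrict_of_ae_restrict_of_subset (Set.Ioc_subset_Ioc le_rfl hαL) hunit
        rw [MeasureTheory.integral_congr_ae (g := fun _ => (1:ℝ)) (by
          filter_upwards [hunit'] with s hs
          exact hs)]
        simp [Real.volume_Ioc, hα0.le]
      calc ‖φg α‖ = ‖∫ s in (0:ℝ)..α, dφg s‖ := by rw [h2]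
        _ ≤ ∫ s in (0:ℝ)..α, ‖dφg s‖ := intervalIntegral.norm_integral_le_integral_norm hα0.le
        _ = α := hnorm1
        _ ≤ ρ/2^k := min_le_left _ _
    obtain ⟨T, hT, ψ, dψ, hAψ, -, hle⟩ := hsub α ⟨hα0, hαL⟩
    obtain ⟨hAΦ, hactΦ⟩ := concat (b := b) hb hT hAψ
    have hTT : (0:ℝ) < 1 + T := by linarith
    obtain ⟨hA1, hSsc⟩ := adm_rescale (b := b) hTT hAΦ
    set Φb := fun s : ℝ => (fun t : ℝ => if t ≤ 1 then t • φg α else ψ (t-1)) ((1+T)*s) with hΦb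
    set dΦb := fun s : ℝ => (1+T) • (fun t : ℝ => if t ≤ 1 then φg α else dψ (t-1)) ((1+T)*s)
      with hdΦb
    have hShatb : Shat b Φb dΦb ≤ V + (1 + (K:ℝ)^2/3) * (ρ/2^k)^2 := by
      have hlin := lin_action_bound hb hb0 (φg α)
      have hsq : ‖φg α‖^2 ≤ (ρ/2^k)^2 := pow_le_pow_left₀ (norm_nonneg _) hynorm 2
      calc Shat b Φb dΦb ≤ Ssc b (1+T) Φb dΦb := shat_le_ssc hb hA1.1 hTT
        _ = action b (1+T) _ _ := hSsc
        _ = (1/2) * (∫ t in (0:ℝ)..1, ‖φg α - b (t • φg α)‖^2) + action b T ψ dψ := hactΦ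
        _ ≤ (1 + (K:ℝ)^2/3) * ‖φg α‖^2 + V := add_le_add hlin hle
        _ ≤ V + (1 + (K:ℝ)^2/3) * (ρ/2^k)^2 := by nlinarith
    refine ⟨max 1 ⌈That b Φb dΦb⌉₊, le_max_left _ _, ?_⟩
    have hm := hbar (max 1 ⌈That b Φb dΦb⌉₊) (le_max_left _ _)
    rw [hm.2.2]
    refine le_trans (csInf_le (hcbdd _) ⟨Φb, dΦb, hA1, ?_, rfl⟩) hShatb
    calc That b Φb dΦb ≤ (⌈That b Φb dΦb⌉₊ : ℝ) := Nat.le_ceil _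
      _ ≤ ((max 1 ⌈That b Φb dΦb⌉₊ : ℕ) : ℝ) := by exact_mod_cast le_max_right _ _
  -- (c)
  refine ⟨ha, hBnd, ?_, hd⟩
  rw [hd]
  refine tendsto_order.2 ⟨fun c hc => ?_, fun c hc => ?_⟩
  · filter_upwards [eventually_ge_atTop 1] with m hm
    exact lt_of_lt_of_le hc (hVshat _ _ (hbar m hm).1)
  · have h12 : Tendsto (fun k : ℕ => ((1:ℝ)/2)^k) atTop (𝓝 0) :=
      tendsto_pow_atTop_nhds_zero_of_lt_one (by norm_num) (by norm_num)
    have hterm : Tendsto (fun k : ℕ => (1 + (K:ℝ)^2/3) * (ρ/2^k)^2) atTop (𝓝 0) := by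
      have heq : (fun k : ℕ => (1 + (K:ℝ)^2/3) * (ρ/2^k)^2)
          = fun k : ℕ => (1 + (K:ℝ)^2/3) * (ρ * ((1:ℝ)/2)^k)^2 := by
        funext k
        rw [div_eq_mul_inv ρ, ← inv_pow, one_div]
      rw [heq]
      have h2 := h12.const_mul ρ
      rw [mul_zero] at h2
      have h3 := h2.pow 2
      rw [zero_pow two_ne_zero] at h3
      have h4 := h3.const_mul (1 + (K:ℝ)^2/3)
      rwa [mul_zero] at h4
    obtain ⟨k, hk⟩ := (hterm.eventually_lt_const (sub_pos.2 hc)).exists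
    obtain ⟨m0, hm0ge, hm0⟩ := hBnd k
    filter_upwards [eventually_ge_atTop m0] with m hm
    have h5 := le_trans (ha m0 m hm0ge hm) hm0
    linarith
end
end
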